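/- arXiv:1512.07308 — 5 statements merged into one kernel-verified Lean document; each statement's English description precedes it below -/
import Mathlib

section
/- (Proposition 1, divergence part) Suppose K_∞ = L_∞ = ∞. Then C = D = ∞, and for every l ≥ 0 and every real x < 0, Q_n^{(l)}(x) → ∞ as n → ∞. -/
open Filter Topology ENNReal MeasureTheory

theorem stmt4
    (lam mu : ℕ → ℝ) (pi : ℕ → ℝ)
    (hlam : ∀ n, 0 < lam n) (hmu0 : 0 ≤ mu 0) (hmu : ∀ n, 1 ≤ n → 0 < mu n)
    (hpi0 : pi 0 = 1) (hpi : ∀ n, pi (n + 1) = pi n * lam n / mu (n + 1))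
    (K : ℕ → ℝ≥0∞) (hK : ∀ n, K n = ∑ i ∈ Finset.range (n + 1), ENNReal.ofReal (pi i))
    (Kinf Linf C D : ℝ≥0∞)
    (hKinf : Kinf = ∑' i, ENNReal.ofReal (pi i))
    (hLinf : Linf = ∑' i, ENNReal.ofReal (1 / (lam i * pi i)))
    (hC : C = ∑' n, ENNReal.ofReal (1 / (lam n * pi n)) * K n)
    (hD : D = ∑' n, ENNReal.ofReal (1 / (lam n * pi n)) * (Kinf - K n))
    (Q : ℕ → ℕ → ℝ → ℝ)
    (hQ0 : ∀ l x, Q l 0 x = 1)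
    (hQ1 : ∀ l x, lam l * Q l 1 x = lam l + mu l - x)
    (hQrec : ∀ l n x, lam (n + 1 + l) * Q l (n + 2) x
      = (lam (n + 1 + l) + mu (n + 1 + l) - x) * Q l (n + 1) x - mu (n + 1 + l) * Q l n x)
    (hKtop : Kinf = ⊤) (hLtop : Linf = ⊤) :
    C = ⊤ ∧ D = ⊤ ∧
      ∀ l, ∀ x : ℝ, x < 0 → Tendsto (fun n => Q l n x) atTop atTop := by
  have hpipos : ∀ n, 0 < pi n := by
    intro n
    induction n with
    | zero => simp [hpi0]
    | succ n ih =>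
      rw [hpi]
      exact div_pos (mul_pos ih (hlam n)) (hmu (n + 1) (Nat.le_add_left 1 n))
  have hmunn : ∀ n, 0 ≤ mu n := by
    intro n
    cases n with
    | zero => exact hmu0
    | succ n => exact (hmu (n + 1) (Nat.le_add_left 1 n)).le
  have hgpos : ∀ n, 0 < 1 / (lam n * pi n) := fun n =>
    one_div_pos.mpr (mul_pos (hlam n) (hpipos n))
  have hCtop : C = ⊤ := by
    rw [eq_top_iff, ← hLtop, hLinf, hC]
    refine ENNReal.tsum_le_tsum fun n => ?_
    conv_lhs => rw [← mul_one (ENNReal.ofReal (1 / (lam n * pi n)))]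
    refine mul_le_mul_right ?_ _
    rw [hK]
    calc (1 : ℝ≥0∞) = ENNReal.ofReal (pi 0) := by simp [hpi0]
      _ ≤ _ := Finset.single_le_sum (f := fun i => ENNReal.ofReal (pi i)) (fun i _ => zero_le)
            (Finset.mem_range.mpr (Nat.succ_pos n))
  have hDtop : D = ⊤ := by
    have hKfin : K 0 ≠ ⊤ := by
      rw [hK]
      simp
    rw [eq_top_iff, hD]
    refine le_trans ?_ (ENNReal.le_tsum 0)
    rw [hKtop, ENNReal.top_sub hKfin,
      ENNReal.mul_top (ENNReal.ofReal_pos.mpr (hgpos 0)).ne']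
  refine ⟨hCtop, hDtop, ?_⟩
  intro l x hx
  -- non-summability of 1/(lam n * pi n)
  have hns : ¬ Summable (fun n => 1 / (lam n * pi n)) := by
    intro hs
    have h := ENNReal.ofReal_tsum_of_nonneg (fun n => (hgpos n).le) hs
    rw [hLinf, ← h] at hLtop
    exact ENNReal.ofReal_ne_top hLtop
  have htend : Tendsto (fun N => ∑ n ∈ Finset.range N, 1 / (lam n * pi n)) atTop atTop :=
    (not_summable_iff_tendsto_nat_atTop_of_nonneg (fun n => (hgpos n).le)).mp hns
  have heq : ∀ N, ∑ n ∈ Finset.range (l + N), 1 / (lam n * pi n)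
      = (∑ n ∈ Finset.range l, 1 / (lam n * pi n))
        + ∑ n ∈ Finset.range N, 1 / (lam (n + l) * pi (n + l)) := by
    intro N
    rw [Finset.sum_range_add]
    congr 1
    exact Finset.sum_congr rfl fun i _ => by rw [Nat.add_comm]
  have hSl : Tendsto (fun N => ∑ n ∈ Finset.range (l + N), 1 / (lam n * pi n)) atTop atTop := by
    have h := htend.comp (tendsto_add_atTop_nat l)
    simpa [Function.comp_def, Nat.add_comm] using h
  have htendl : Tendsto (fun N => ∑ n ∈ Finset.range N, 1 / (lam (n + l) * pi (n + l)))
      atTop atTop := by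
    have h := tendsto_atTop_add_const_right atTop
      (-(∑ n ∈ Finset.range l, 1 / (lam n * pi n))) hSl
    exact h.congr fun N => by rw [heq N]; ring
  -- shifted pi
  set p : ℕ → ℝ := fun n => pi (n + l) / pi l with hp
  have hppos : ∀ n, 0 < p n := fun n => div_pos (hpipos _) (hpipos l)
  have hp0 : p 0 = 1 := by
    rw [hp]
    simp [div_self (hpipos l).ne']
  have hpkey : ∀ n, mu (n + 1 + l) * p (n + 1) = lam (n + l) * p n := by
    intro n
    have e : n + 1 + l = (n + l) + 1 := by omega
    rw [hp]
    simp only [e]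
    rw [hpi (n + l)]
    have h1 : mu (n + l + 1) ≠ 0 := (hmu _ (by omega)).ne'
    have h2 : pi l ≠ 0 := (hpipos l).ne'
    field_simp
  have main : ∀ n, 1 ≤ Q l n x ∧
      -x ≤ lam (n + l) * p n * (Q l (n + 1) x - Q l n x) := by
    intro n
    induction n with
    | zero =>
      refine ⟨by rw [hQ0], ?_⟩
      simp only [Nat.zero_add, hp0, hQ0, mul_one]
      have h1 := hQ1 l x
      have h2 := hmunn l
      nlinarith [h1, h2]
    | succ n ih =>
      obtain ⟨ih1, ih2⟩ := ih
      have hpos : 0 < lam (n + l) * p n := mul_pos (hlam _) (hppos n)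
      have ht : (-x) / (lam (n + l) * p n) ≤ Q l (n + 1) x - Q l n x :=
        (div_le_iff₀ hpos).mpr (by linarith [ih2])
      have htp : 0 < (-x) / (lam (n + l) * p n) := div_pos (by linarith) hpos
      have hQ1le : 1 ≤ Q l (n + 1) x := by linarith
      refine ⟨hQ1le, ?_⟩
      have hrec2 : lam (n + 1 + l) * (Q l (n + 2) x - Q l (n + 1) x)
          = mu (n + 1 + l) * (Q l (n + 1) x - Q l n x) - x * Q l (n + 1) x := by
        linear_combination hQrec l n x
      have hkey := hpkey n
      have hid : lam (n + 1 + l) * p (n + 1) * (Q l (n + 2) x - Q l (n + 1) x)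
          = lam (n + l) * p n * (Q l (n + 1) x - Q l n x)
            + (-x) * (p (n + 1) * Q l (n + 1) x) := by
        linear_combination p (n + 1) * hrec2 + (Q l (n + 1) x - Q l n x) * hkey
      have h4 : 0 ≤ (-x) * (p (n + 1) * Q l (n + 1) x) :=
        mul_nonneg (by linarith) (mul_nonneg (hppos _).le (by linarith))
      show -x ≤ lam (n + 1 + l) * p (n + 1) * (Q l (n + 2) x - Q l (n + 1) x)
      linarith [hid, ih2, h4]
  have hterm : ∀ n, (-x) / (lam (n + l) * p n)
      = (-x) * pi l * (1 / (lam (n + l) * pi (n + l))) := by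
    intro n
    rw [hp]
    have h1 : lam (n + l) ≠ 0 := (hlam _).ne'
    have h2 : pi (n + l) ≠ 0 := (hpipos _).ne'
    have h3 : pi l ≠ 0 := (hpipos l).ne'
    field_simp
  have lb : ∀ N, 1 + (-x) * pi l
      * ∑ n ∈ Finset.range N, 1 / (lam (n + l) * pi (n + l)) ≤ Q l N x := by
    intro N
    induction N with
    | zero => simp [hQ0]
    | succ N ihN =>
      have h2 := (main N).2
      have hpos : 0 < lam (N + l) * p N := mul_pos (hlam _) (hppos N)
      have ht : (-x) / (lam (N + l) * p N) ≤ Q l (N + 1) x - Q l N x :=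
        (div_le_iff₀ hpos).mpr (by linarith [h2])
      rw [hterm N] at ht
      rw [Finset.sum_range_succ, mul_add]
      linarith [ihN, ht]
  have hcpos : 0 < (-x) * pi l := mul_pos (by linarith) (hpipos l)
  have hlow : Tendsto (fun N => 1 + (-x) * pi l
      * ∑ n ∈ Finset.range N, 1 / (lam (n + l) * pi (n + l))) atTop atTop :=
    tendsto_atTop_add_const_left atTop 1 (htendl.const_mul_atTop hcpos)
  exact tendsto_atTop_mono lb hlow
end

section
/- (Proposition 1, σ = 0 part) Suppose K_∞ = L_∞ = ∞. Then ξ_i^{(l)} = 0 for every i ≥ 1 and l ≥ 0; equivalently, σ := lim_{i→∞} ξ_i = 0. -/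
open Filter Topology ENNReal MeasureTheory

section BDAux

open Finset Polynomial

/-- Oscillation lemma: a solution of the discrete Sturm-Liouville recurrence with
divergent series must go negative at arbitrarily large indices. -/
lemma bd_osc_neg (p r q : ℕ → ℝ) (x : ℝ) (hx : 0 < x)
    (hp : ∀ k, 0 < p k) (hr : ∀ k, 0 < r k)
    (hrec : ∀ n, p (n+1) * (q (n+2) - q (n+1)) = p n * (q (n+1) - q n) - x * r (n+1) * q (n+1))
    (hdown : ∀ t, q (t+1) = 0 → q (t+2) = 0 → q t = 0)
    (hq0 : q 0 ≠ 0)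
    (hL : Tendsto (fun n => ∑ k ∈ Finset.range n, (p k)⁻¹) atTop atTop)
    (hK : Tendsto (fun n => ∑ k ∈ Finset.range n, r k) atTop atTop)
    (m : ℕ) : ∃ n, m ≤ n ∧ q n < 0 := by
  by_contra h
  push_neg at h
  set D : ℕ → ℝ := fun k => p k * (q (k+1) - q k) with hD
  have hDrec : ∀ k, D (k+1) = D k - x * r (k+1) * q (k+1) := fun k => hrec k
  have hstep : ∀ n, q (n+1) = q n + D n / p n := by
    intro n
    have hpn : (p n) ≠ 0 := (hp n).ne'
    simp only [hD]
    rw [mul_comm, mul_div_assoc, div_self hpn, mul_one]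
    ring
  have hDmono : ∀ k, m ≤ k → D (k+1) ≤ D k := by
    intro k hk
    have h1 : 0 ≤ q (k+1) := h _ (le_trans hk (Nat.le_succ k))
    have : 0 ≤ x * r (k+1) * q (k+1) := mul_nonneg (mul_nonneg hx.le (hr _).le) h1
    rw [hDrec k]; linarith
  have hDle : ∀ k0, m ≤ k0 → ∀ k, k0 ≤ k → D k ≤ D k0 := by
    intro k0 hk0 k hk
    induction k with
    | zero => simp [Nat.le_zero.mp hk]
    | succ n ih =>
      rcases Nat.lt_or_ge k0 (n+1) with h' | h'
      · have hn : k0 ≤ n := Nat.lt_succ_iff.mp h'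
        exact le_trans (hDmono n (le_trans hk0 hn)) (ih hn)
      · have : k0 = n + 1 := le_antisymm hk h'
        simp [this]
  by_cases hcase : ∃ k0, m ≤ k0 ∧ D k0 < 0
  · obtain ⟨k0, hk0, hDk0⟩ := hcase
    have key : ∀ n, k0 ≤ n → q n ≤ q k0 + D k0 * ∑ k ∈ Finset.Ico k0 n, (p k)⁻¹ := by
      intro n hn
      induction n with
      | zero => simp [Nat.le_zero.mp hn]
      | succ n ih =>
        rcases Nat.lt_or_ge k0 (n+1) with h' | h'
        · have hn' : k0 ≤ n := Nat.lt_succ_iff.mp h'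
          have ihn := ih hn'
          have hsum : ∑ k ∈ Finset.Ico k0 (n+1), (p k)⁻¹
              = (∑ k ∈ Finset.Ico k0 n, (p k)⁻¹) + (p n)⁻¹ :=
            Finset.sum_Ico_succ_top hn' _
          have hq : q (n+1) = q n + D n / p n := hstep n
          have hDn : D n ≤ D k0 := hDle k0 hk0 n hn'
          have hpn : 0 < (p n)⁻¹ := inv_pos.mpr (hp n)
          have : D n / p n ≤ D k0 * (p n)⁻¹ := by
            rw [div_eq_mul_inv]
            exact mul_le_mul_of_nonneg_right hDn hpn.le
          rw [hq, hsum]; linarith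
        · have : k0 = n + 1 := le_antisymm hn h'
          simp [this]
    have htail : Tendsto (fun n => ∑ k ∈ Finset.Ico k0 n, (p k)⁻¹) atTop atTop := by
      have heq : ∀ n, k0 ≤ n → ∑ k ∈ Finset.Ico k0 n, (p k)⁻¹
          = (∑ k ∈ Finset.range n, (p k)⁻¹) - ∑ k ∈ Finset.range k0, (p k)⁻¹ := by
        intro n hn
        rw [Finset.sum_Ico_eq_sub _ hn]
      have h2 : Tendsto (fun n => (∑ k ∈ Finset.range n, (p k)⁻¹)
          - ∑ k ∈ Finset.range k0, (p k)⁻¹) atTop atTop :=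
        hL.atTop_add tendsto_const_nhds
      refine h2.congr' ?_
      filter_upwards [eventually_ge_atTop k0] with n hn
      exact (heq n hn).symm
    obtain ⟨n, hn1, hn2⟩ : ∃ n, k0 ≤ n ∧ (q k0 + 1) / (-D k0) ≤ ∑ k ∈ Finset.Ico k0 n, (p k)⁻¹ := by
      have := (htail.eventually_ge_atTop ((q k0 + 1) / (-D k0))).and (eventually_ge_atTop k0)
      obtain ⟨n, hn⟩ := this.exists
      exact ⟨n, hn.2, hn.1⟩
    have hq0' : 0 ≤ q k0 := h _ hk0
    have hDneg : 0 < -D k0 := by linarith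
    have : (q k0 + 1) ≤ (-D k0) * ∑ k ∈ Finset.Ico k0 n, (p k)⁻¹ := by
      rw [div_le_iff₀ hDneg] at hn2
      linarith [hn2]
    have hqn := key n hn1
    have : q n ≤ -1 := by nlinarith
    have : 0 ≤ q n := h _ (le_trans hk0 hn1)
    linarith
  · push_neg at hcase
    have hqmono : ∀ j k, m ≤ j → j ≤ k → q j ≤ q k := by
      intro j k hj hjk
      induction k with
      | zero => simp [Nat.le_zero.mp hjk]
      | succ n ih =>
        rcases Nat.lt_or_ge j (n+1) with h' | h'
        · have hn : j ≤ n := Nat.lt_succ_iff.mp h'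
          have h1 : q n ≤ q (n+1) := by
            have hDn : 0 ≤ D n := hcase n (le_trans hj hn)
            have := hstep n
            have hpn : 0 < p n := hp n
            nlinarith [div_nonneg hDn hpn.le]
          exact le_trans (ih hn) h1
        · have : j = n + 1 := le_antisymm hjk h'
          simp [this]
    by_cases hpos : ∃ j, m ≤ j ∧ 0 < q j
    · obtain ⟨j, hj, hqj⟩ := hpos
      have tele : ∀ n, j ≤ n → D n = D j - x * ∑ k ∈ Finset.Ico j n, r (k+1) * q (k+1) := by
        intro n hn
        induction n with
        | zero => simp [Nat.le_zero.mp hn]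
        | succ n ih =>
          rcases Nat.lt_or_ge j (n+1) with h' | h'
          · have hn' : j ≤ n := Nat.lt_succ_iff.mp h'
            rw [hDrec n, ih hn', Finset.sum_Ico_succ_top hn']
            ring
          · have : j = n + 1 := le_antisymm hn h'
            simp [this]
      have hbound : ∀ n, j ≤ n →
          q j * ∑ k ∈ Finset.Ico j n, r (k+1) ≤ ∑ k ∈ Finset.Ico j n, r (k+1) * q (k+1) := by
        intro n hn
        rw [Finset.mul_sum]
        refine Finset.sum_le_sum ?_
        intro k hk
        have hk1 : j ≤ k := (Finset.mem_Ico.mp hk).1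
        have : q j ≤ q (k+1) := hqmono j (k+1) hj (le_trans hk1 (Nat.le_succ k))
        have := hr (k+1)
        nlinarith
      have hshift : ∀ n, ∑ k ∈ Finset.Ico j n, r (k+1) = ∑ t ∈ Finset.Ico (j+1) (n+1), r t := by
        intro n
        rw [Finset.sum_Ico_eq_sum_range, Finset.sum_Ico_eq_sum_range]
        simp only [Nat.succ_sub_succ]
        refine Finset.sum_congr rfl fun k _ => ?_
        congr 1
        omega
      have htail : Tendsto (fun n => ∑ k ∈ Finset.Ico j n, r (k+1)) atTop atTop := by
        have heq : ∀ n, j ≤ n → ∑ k ∈ Finset.Ico j n, r (k+1)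
            = (∑ k ∈ Finset.range (n+1), r k) - ∑ k ∈ Finset.range (j+1), r k := by
          intro n hn
          rw [hshift n, Finset.sum_Ico_eq_sub _ (Nat.succ_le_succ hn)]
        have h2 : Tendsto (fun n => (∑ k ∈ Finset.range (n+1), r k)
            - ∑ k ∈ Finset.range (j+1), r k) atTop atTop :=
          Tendsto.atTop_add (hK.comp (tendsto_add_atTop_nat 1)) tendsto_const_nhds
        refine h2.congr' ?_
        filter_upwards [eventually_ge_atTop j] with n hn
        exact (heq n hn).symm
      obtain ⟨n, hn1, hn2⟩ : ∃ n, j ≤ n ∧ (D j + 1) / (x * q j) ≤ ∑ k ∈ Finset.Ico j n, r (k+1) := by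
        have := (htail.eventually_ge_atTop ((D j + 1) / (x * q j))).and (eventually_ge_atTop j)
        obtain ⟨n, hn⟩ := this.exists
        exact ⟨n, hn.2, hn.1⟩
      have hxq : 0 < x * q j := mul_pos hx hqj
      have h3 : D j + 1 ≤ (x * q j) * ∑ k ∈ Finset.Ico j n, r (k+1) := by
        rw [div_le_iff₀ hxq] at hn2
        linarith
      have h4 := hbound n hn1
      have h5 := tele n hn1
      have h6 : 0 ≤ D n := hcase n (le_trans hj hn1)
      nlinarith
    · push_neg at hpos
      have hzero : ∀ j, m ≤ j → q j = 0 := fun j hj => le_antisymm (hpos j hj) (h j hj)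
      have down : ∀ t, q t = 0 → q (t+1) = 0 → q 0 = 0 := by
        intro t
        induction t with
        | zero => intro h0 _; exact h0
        | succ n ih => intro h1 h2; exact ih (hdown n h1 h2) h1
      exact hq0 (down m (hzero m le_rfl) (hzero (m+1) (Nat.le_succ m)))

/-- The birth-death polynomials, as genuine polynomials. -/
noncomputable def auxP (A B : ℕ → ℝ) : ℕ → Polynomial ℝ
  | 0 => 1
  | 1 => C ((A 0 + B 0) / A 0) - C (A 0)⁻¹ * X
  | (n+2) => (C ((A (n+1) + B (n+1)) / A (n+1)) - C (A (n+1))⁻¹ * X) * auxP A B (n+1)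
      - C (B (n+1) / A (n+1)) * auxP A B n

lemma auxP_natDegree_le (A B : ℕ → ℝ) : ∀ n, (auxP A B n).natDegree ≤ n := by
  intro n
  induction n using Nat.strong_induction_on with
  | _ n ih =>
    match n with
    | 0 => simp [auxP]
    | 1 =>
      rw [auxP]
      refine le_trans (natDegree_sub_le _ _) ?_
      simp only [natDegree_C, max_le_iff]
      constructor
      · omega
      · exact le_trans (natDegree_mul_le) (by simp)
    | (n+2) =>
      rw [auxP]
      refine le_trans (natDegree_sub_le _ _) ?_
      rw [max_le_iff]
      constructor
      · refine le_trans (natDegree_mul_le) ?_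
        have h1 : (C ((A (n+1) + B (n+1)) / A (n+1)) - C (A (n+1))⁻¹ * X).natDegree ≤ 1 := by
          refine le_trans (natDegree_sub_le _ _) ?_
          simp only [natDegree_C, max_le_iff]
          exact ⟨by omega, le_trans (natDegree_mul_le) (by simp)⟩
        have h2 := ih (n+1) (by omega)
        omega
      · refine le_trans (natDegree_mul_le) ?_
        have h2 := ih n (by omega)
        simp only [natDegree_C]
        omega

lemma auxP_coeff (A B : ℕ → ℝ) :
    ∀ n, (auxP A B n).coeff n = (-1)^n * ∏ k ∈ Finset.range n, (A k)⁻¹ := by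
  intro n
  induction n using Nat.strong_induction_on with
  | _ n ih =>
    match n with
    | 0 => simp [auxP]
    | 1 =>
      rw [auxP]
      simp [coeff_sub, coeff_C, coeff_C_mul, coeff_X_one]
    | (n+2) =>
      rw [auxP]
      have hd1 := auxP_natDegree_le A B (n+1)
      have hd0 := auxP_natDegree_le A B n
      have e1 : (auxP A B (n+1)).coeff (n+2) = 0 :=
        coeff_eq_zero_of_natDegree_lt (by omega)
      have e0 : (auxP A B n).coeff (n+2) = 0 :=
        coeff_eq_zero_of_natDegree_lt (by omega)
      rw [coeff_sub, sub_mul, coeff_sub, coeff_C_mul, coeff_C_mul, mul_assoc,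
        coeff_C_mul, coeff_X_mul, e1, e0, ih (n+1) (by omega)]
      simp only [Finset.prod_range_succ]
      ring

lemma auxP_eval (A B : ℕ → ℝ) (hA : ∀ k, 0 < A k) (f : ℕ → ℝ → ℝ)
    (h0 : ∀ x, f 0 x = 1) (h1 : ∀ x, A 0 * f 1 x = A 0 + B 0 - x)
    (hrec : ∀ n x, A (n+1) * f (n+2) x
      = (A (n+1) + B (n+1) - x) * f (n+1) x - B (n+1) * f n x) :
    ∀ n x, (auxP A B n).eval x = f n x := by
  intro n
  induction n using Nat.strong_induction_on with
  | _ n ih =>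
    match n with
    | 0 => intro x; simp [auxP, h0]
    | 1 =>
      intro x
      have hAne : A 0 ≠ 0 := (hA 0).ne'
      simp only [auxP, eval_sub, eval_mul, eval_C, eval_X]
      field_simp
      linear_combination -h1 x
    | (n+2) =>
      intro x
      have hAne : A (n+1) ≠ 0 := (hA (n+1)).ne'
      simp only [auxP, eval_sub, eval_mul, eval_C, eval_X,
        ih (n+1) (by omega), ih n (by omega)]
      field_simp
      linear_combination -hrec n x

lemma prod_neg_sign (s : Finset ℕ) (g : ℕ → ℝ) (h : ∀ j ∈ s, g j < 0) :
    0 < (-1 : ℝ)^s.card * ∏ j ∈ s, g j := by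
  induction s using Finset.induction_on with
  | empty => simp
  | @insert a s ha ih =>
    have hga : g a < 0 := h a (Finset.mem_insert_self a s)
    have ih' := ih (fun j hj => h j (Finset.mem_insert_of_mem hj))
    have h2 : (-1 : ℝ)^(insert a s).card * ∏ j ∈ insert a s, g j
        = (-g a) * ((-1 : ℝ)^s.card * ∏ j ∈ s, g j) := by
      rw [Finset.card_insert_of_notMem ha, Finset.prod_insert ha, pow_succ]
      ring
    rw [h2]
    exact mul_pos (neg_pos.mpr hga) ih'

lemma sign_lemma (p : Polynomial ℝ) (n : ℕ) (hn : 1 ≤ n)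
    (hdeg : p.natDegree = n) (hlc : 0 < (-1 : ℝ)^n * p.leadingCoeff)
    (z : ℕ → ℝ) (hmono : ∀ i j, 1 ≤ i → i < j → j ≤ n → z i < z j)
    (hroot : ∀ j, 1 ≤ j → j ≤ n → p.eval (z j) = 0)
    (x : ℝ) (hx : ∀ j, 1 ≤ j → j ≤ n → z j ≠ x) :
    0 < (-1 : ℝ)^(((Finset.Icc 1 n).filter (fun j => z j < x)).card) * p.eval x := by
  have hlcne : p.leadingCoeff ≠ 0 := by
    intro h; rw [h] at hlc; simp at hlc
  have hp0 : p ≠ 0 := fun h => hlcne (by simp [h])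
  have hinj : Set.InjOn z (Finset.Icc 1 n) := by
    intro i hi j hj hij
    simp only [Finset.coe_Icc, Set.mem_Icc] at hi hj
    by_contra hne
    rcases Nat.lt_or_ge i j with h' | h'
    · exact absurd hij (ne_of_lt (hmono i j hi.1 h' hj.2))
    · have h'' : j < i := lt_of_le_of_ne h' (Ne.symm hne)
      exact absurd hij.symm (ne_of_lt (hmono j i hj.1 h'' hi.2))
  set T : Finset ℝ := (Finset.Icc 1 n).image z with hT
  have hcardT : T.card = n := by
    rw [hT, Finset.card_image_of_injOn hinj, Nat.card_Icc]; omega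
  have hle : T.val ≤ p.roots := by
    rw [Multiset.le_iff_count]
    intro t
    by_cases ht : t ∈ T
    · have h1 : T.val.count t = 1 := Multiset.count_eq_one_of_mem T.nodup ht
      obtain ⟨j, hj, rfl⟩ := Finset.mem_image.mp ht
      simp only [Finset.mem_Icc] at hj
      have : z j ∈ p.roots := by
        rw [Polynomial.mem_roots hp0]
        exact hroot j hj.1 hj.2
      rw [h1]
      exact Multiset.one_le_count_iff_mem.mpr this
    · rw [Multiset.count_eq_zero_of_notMem ht]
      omega
  have hcard : p.roots.card = p.natDegree := by
    refine le_antisymm (Polynomial.card_roots' p) ?_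
    rw [hdeg]
    calc (n : ℕ) = T.card := hcardT.symm
      _ = Multiset.card T.val := rfl
      _ ≤ Multiset.card p.roots := Multiset.card_le_card hle
  have hroots_eq : p.roots = T.val := by
    refine (Multiset.eq_of_le_of_card_le hle ?_).symm
    rw [hcard, hdeg, ← hcardT]
    exact le_of_eq rfl
  have heval : p.eval x = p.leadingCoeff * ((-1 : ℝ)^n * ∏ j ∈ Finset.Icc 1 n, (z j - x)) := by
    conv_lhs => rw [← Polynomial.C_leadingCoeff_mul_prod_multiset_X_sub_C hcard]
    rw [eval_mul, eval_C, hroots_eq]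
    congr 1
    have : Multiset.prod (Multiset.map (fun a => X - C a) T.val) =
        ∏ t ∈ T, (X - C t) := rfl
    rw [this, Finset.prod_image hinj, eval_prod]
    have hcardIcc : (Finset.Icc 1 n).card = n := by rw [Nat.card_Icc]; omega
    have hpt : ∀ j ∈ Finset.Icc 1 n, eval x (X - C (z j)) = (-1 : ℝ) * (z j - x) := by
      intro j _
      simp only [eval_sub, eval_X, eval_C]
      ring
    rw [Finset.prod_congr rfl hpt, Finset.prod_mul_distrib, Finset.prod_const, hcardIcc]
  set S := (Finset.Icc 1 n).filter (fun j => z j < x) with hS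
  have h1 : 0 < (-1 : ℝ)^S.card * ∏ j ∈ S, (z j - x) := by
    refine prod_neg_sign S _ fun j hj => ?_
    rw [hS, Finset.mem_filter] at hj
    linarith [hj.2]
  have h2 : 0 < ∏ j ∈ (Finset.Icc 1 n).filter (fun j => ¬(z j < x)), (z j - x) := by
    refine Finset.prod_pos fun j hj => ?_
    rw [Finset.mem_filter, Finset.mem_Icc] at hj
    have := hx j hj.1.1 hj.1.2
    rcases lt_or_gt_of_ne this with h' | h'
    · exact absurd h' hj.2
    · linarith
  have hsplit : ∏ j ∈ Finset.Icc 1 n, (z j - x)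
      = (∏ j ∈ S, (z j - x)) * ∏ j ∈ (Finset.Icc 1 n).filter (fun j => ¬(z j < x)), (z j - x) :=
    (Finset.prod_filter_mul_prod_filter_not _ _ _).symm
  have hfinal : (-1 : ℝ)^S.card * p.eval x
      = ((-1 : ℝ)^n * p.leadingCoeff) * ((-1 : ℝ)^S.card * ∏ j ∈ S, (z j - x))
        * ∏ j ∈ (Finset.Icc 1 n).filter (fun j => ¬(z j < x)), (z j - x) := by
    rw [heval, hsplit]; ring
  rw [hfinal]
  exact mul_pos (mul_pos hlc h1) h2

lemma sum_shift_tendsto (g : ℕ → ℝ) (l : ℕ)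
    (h : Tendsto (fun n => ∑ k ∈ Finset.range n, g k) atTop atTop) :
    Tendsto (fun n => ∑ k ∈ Finset.range n, g (k + l)) atTop atTop := by
  have key : ∀ n, ∑ k ∈ Finset.range n, g (k + l)
      = (∑ k ∈ Finset.range (n + l), g k) - ∑ k ∈ Finset.range l, g k := by
    intro n
    have h1 : ∑ k ∈ Finset.range n, g (k + l) = ∑ k ∈ Finset.Ico l (n + l), g k := by
      rw [Finset.sum_Ico_eq_sum_range]
      simp only [Nat.add_sub_cancel]
      refine Finset.sum_congr rfl fun k _ => ?_
      congr 1; omega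
    rw [h1, Finset.sum_Ico_eq_sub _ (Nat.le_add_left l n)]
  have h2 : Tendsto (fun n => (∑ k ∈ Finset.range (n + l), g k)
      - ∑ k ∈ Finset.range l, g k) atTop atTop :=
    Tendsto.atTop_add (h.comp (tendsto_add_atTop_nat l)) tendsto_const_nhds
  exact h2.congr fun n => (key n).symm

end BDAux

theorem stmt5
    (lam mu : ℕ → ℝ) (pi : ℕ → ℝ)
    (hlam : ∀ n, 0 < lam n) (hmu0 : 0 ≤ mu 0) (hmu : ∀ n, 1 ≤ n → 0 < mu n)
    (hpi0 : pi 0 = 1) (hpi : ∀ n, pi (n + 1) = pi n * lam n / mu (n + 1))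
    (K : ℕ → ℝ≥0∞) (hK : ∀ n, K n = ∑ i ∈ Finset.range (n + 1), ENNReal.ofReal (pi i))
    (Kinf Linf C D : ℝ≥0∞)
    (hKinf : Kinf = ∑' i, ENNReal.ofReal (pi i))
    (hLinf : Linf = ∑' i, ENNReal.ofReal (1 / (lam i * pi i)))
    (hC : C = ∑' n, ENNReal.ofReal (1 / (lam n * pi n)) * K n)
    (hD : D = ∑' n, ENNReal.ofReal (1 / (lam n * pi n)) * (Kinf - K n))
    (Q : ℕ → ℕ → ℝ → ℝ)
    (hQ0 : ∀ l x, Q l 0 x = 1)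
    (hQ1 : ∀ l x, lam l * Q l 1 x = lam l + mu l - x)
    (hQrec : ∀ l n x, lam (n + 1 + l) * Q l (n + 2) x
      = (lam (n + 1 + l) + mu (n + 1 + l) - x) * Q l (n + 1) x - mu (n + 1 + l) * Q l n x)
    (z : ℕ → ℕ → ℕ → ℝ) (xi : ℕ → ℕ → ℝ)
    (hzpos : ∀ l n i, 1 ≤ i → i ≤ n → 0 < z l n i)
    (hzlt : ∀ l n i, 1 ≤ i → i + 1 ≤ n → z l n i < z l n (i + 1))
    (hzero : ∀ l n i, 1 ≤ i → i ≤ n → Q l n (z l n i) = 0)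
    (hzall : ∀ l n, 1 ≤ n → ∀ y, Q l n y = 0 → ∃ i, 1 ≤ i ∧ i ≤ n ∧ y = z l n i)
    (hsep1 : ∀ l n i, 1 ≤ i → i ≤ n → z l (n + 1) i < z l n i)
    (hsep2 : ∀ l n i, 1 ≤ i → i ≤ n → z l n i < z l (n + 1) (i + 1))
    (hxi : ∀ l i, 1 ≤ i → Tendsto (fun n => z l n i) atTop (nhds (xi l i)))
    (hKtop : Kinf = ⊤) (hLtop : Linf = ⊤) :
    ∀ l i, 1 ≤ i → xi l i = 0 := by
  intro l i hi
  -- positivity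
  have pipos : ∀ n, 0 < pi n := by
    intro n
    induction n with
    | zero => rw [hpi0]; norm_num
    | succ n ih =>
      rw [hpi n]
      exact div_pos (mul_pos ih (hlam n)) (hmu (n+1) (by omega))
  have pirel : ∀ k, mu (k+1) * pi (k+1) = lam k * pi k := by
    intro k
    have hm : mu (k+1) ≠ 0 := (hmu (k+1) (by omega)).ne'
    rw [hpi k]
    field_simp
  have R2 : ∀ n : ℕ, mu (n+1+l) * pi (n+1+l) = lam (n+l) * pi (n+l) := by
    intro n
    have h := pirel (n+l)
    rw [show n+l+1 = n+1+l from by omega] at h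
    exact h
  -- divergence of the two series
  have hKdiv : Tendsto (fun n => ∑ k ∈ Finset.range n, pi k) atTop atTop := by
    rw [← not_summable_iff_tendsto_nat_atTop_of_nonneg (fun n => (pipos n).le)]
    intro hs
    have h1 := ENNReal.ofReal_tsum_of_nonneg (fun n => (pipos n).le) hs
    have h2 : ENNReal.ofReal (∑' n, pi n) = ⊤ := by rw [h1, ← hKinf, hKtop]
    exact ENNReal.ofReal_ne_top h2
  have hLdiv : Tendsto (fun n => ∑ k ∈ Finset.range n, (1 / (lam k * pi k))) atTop atTop := by
    have hnn : ∀ n, 0 ≤ 1 / (lam n * pi n) :=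
      fun n => div_nonneg zero_le_one (mul_pos (hlam n) (pipos n)).le
    rw [← not_summable_iff_tendsto_nat_atTop_of_nonneg hnn]
    intro hs
    have h1 := ENNReal.ofReal_tsum_of_nonneg hnn hs
    have h2 : ENNReal.ofReal (∑' n, 1 / (lam n * pi n)) = ⊤ := by rw [h1, ← hLinf, hLtop]
    exact ENNReal.ofReal_ne_top h2
  have hKshift : Tendsto (fun n => ∑ k ∈ Finset.range n, pi (k + l)) atTop atTop :=
    sum_shift_tendsto pi l hKdiv
  have hLshift : Tendsto (fun n => ∑ k ∈ Finset.range n, (lam (k+l) * pi (k+l))⁻¹)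
      atTop atTop := by
    have := sum_shift_tendsto (fun k => 1 / (lam k * pi k)) l hLdiv
    simpa [one_div] using this
  -- the polynomials
  have hA : ∀ k : ℕ, 0 < lam (k+l) := fun k => hlam _
  have pe : ∀ n x, (auxP (fun k => lam (k+l)) (fun k => mu (k+l)) n).eval x = Q l n x := by
    refine auxP_eval _ _ hA (fun n x => Q l n x) (hQ0 l) ?_ ?_
    · intro x
      simpa using hQ1 l x
    · intro n x
      exact hQrec l n x
  have hcoeffne : ∀ n, ((auxP (fun k => lam (k+l)) (fun k => mu (k+l)) n).coeff n) ≠ 0 := by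
    intro n
    rw [auxP_coeff]
    have hprod : 0 < ∏ k ∈ Finset.range n, (lam (k+l))⁻¹ :=
      Finset.prod_pos fun k _ => inv_pos.mpr (hA k)
    have : ((-1 : ℝ)^n) ≠ 0 := pow_ne_zero _ (by norm_num)
    exact mul_ne_zero this hprod.ne'
  have hdegn : ∀ n, (auxP (fun k => lam (k+l)) (fun k => mu (k+l)) n).natDegree = n :=
    fun n => le_antisymm (auxP_natDegree_le _ _ n) (Polynomial.le_natDegree_of_ne_zero (hcoeffne n))
  have hlcpos : ∀ n, 0 < (-1 : ℝ)^n
      * (auxP (fun k => lam (k+l)) (fun k => mu (k+l)) n).leadingCoeff := by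
    intro n
    rw [Polynomial.leadingCoeff, hdegn n, auxP_coeff, ← mul_assoc, ← pow_add]
    have he : Even (n + n) := ⟨n, rfl⟩
    rw [he.neg_one_pow, one_mul]
    exact Finset.prod_pos fun k _ => inv_pos.mpr (hA k)
  -- monotonicity of the zeros in the index
  have zlt : ∀ n i j, 1 ≤ i → i < j → j ≤ n → z l n i < z l n j := by
    intro n i j h1 h2 h3
    induction j with
    | zero => omega
    | succ j ih =>
      rcases Nat.lt_or_ge i j with h' | h'
      · exact lt_trans (ih h' (by omega)) (hzlt l n j (by omega) (by omega))
      · have : i = j := by omega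
        subst this
        exact hzlt l n i h1 h3
  have zle : ∀ n i j, 1 ≤ i → i ≤ j → j ≤ n → z l n i ≤ z l n j := by
    intro n i j h1 h2 h3
    rcases eq_or_lt_of_le h2 with h' | h'
    · rw [h']
    · exact (zlt n i j h1 h' h3).le
  -- main step: for every x > 0 there is n with z l n i < x
  have main : ∀ x : ℝ, 0 < x → ∃ n, i ≤ n ∧ z l n i < x := by
    intro x hx
    -- oscillation
    have hosc_neg : ∀ m, ∃ n, m ≤ n ∧ Q l n x < 0 := by
      intro m
      refine bd_osc_neg (fun k => lam (k+l) * pi (k+l)) (fun k => pi (k+l))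
        (fun n => Q l n x) x hx (fun k => mul_pos (hlam _) (pipos _)) (fun k => pipos _)
        ?_ ?_ (by show Q l 0 x ≠ 0; rw [hQ0]; norm_num) hLshift hKshift m
      · intro n
        show lam (n+1+l) * pi (n+1+l) * (Q l (n+2) x - Q l (n+1) x)
          = lam (n+l) * pi (n+l) * (Q l (n+1) x - Q l n x) - x * pi (n+1+l) * Q l (n+1) x
        have hr1 := hQrec l n x
        have hr2 := R2 n
        linear_combination (pi (n+1+l)) * hr1 + (Q l (n+1) x - Q l n x) * hr2
      · intro t h1 h2
        have h1' : Q l (t+1) x = 0 := h1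
        have h2' : Q l (t+2) x = 0 := h2
        show Q l t x = 0
        have hr := hQrec l t x
        rw [h1', h2'] at hr
        have hm : 0 < mu (t+1+l) := hmu _ (by omega)
        have : mu (t+1+l) * Q l t x = 0 := by linarith
        exact (mul_eq_zero.mp this).resolve_left hm.ne'
    have hosc_pos : ∀ m, ∃ n, m ≤ n ∧ 0 < Q l n x := by
      intro m
      obtain ⟨n, hn1, hn2⟩ := bd_osc_neg (fun k => lam (k+l) * pi (k+l)) (fun k => pi (k+l))
        (fun n => -(Q l n x)) x hx (fun k => mul_pos (hlam _) (pipos _)) (fun k => pipos _)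
        (by
          intro n
          show lam (n+1+l) * pi (n+1+l) * (-(Q l (n+2) x) - -(Q l (n+1) x))
            = lam (n+l) * pi (n+l) * (-(Q l (n+1) x) - -(Q l n x)) - x * pi (n+1+l) * -(Q l (n+1) x)
          have hr1 := hQrec l n x
          have hr2 := R2 n
          linear_combination (-(pi (n+1+l))) * hr1 - (Q l (n+1) x - Q l n x) * hr2)
        (by
          intro t h1 h2
          have h1' : Q l (t+1) x = 0 := neg_eq_zero.mp h1
          have h2' : Q l (t+2) x = 0 := neg_eq_zero.mp h2
          show -(Q l t x) = 0
          rw [neg_eq_zero]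
          have hr := hQrec l t x
          rw [h1', h2'] at hr
          have hm : 0 < mu (t+1+l) := hmu _ (by omega)
          have : mu (t+1+l) * Q l t x = 0 := by linarith
          exact (mul_eq_zero.mp this).resolve_left hm.ne')
        (by show -(Q l 0 x) ≠ 0; rw [hQ0]; norm_num) hLshift hKshift m
      exact ⟨n, hn1, by linarith⟩
    -- the sign lemma
    have hsign : ∀ n, 1 ≤ n → (∀ j, 1 ≤ j → j ≤ n → z l n j ≠ x) →
        0 < (-1 : ℝ)^(((Finset.Icc 1 n).filter (fun j => z l n j < x)).card) * Q l n x := by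
      intro n hn hne
      have := sign_lemma (auxP (fun k => lam (k+l)) (fun k => mu (k+l)) n) n hn (hdegn n)
        (hlcpos n) (z l n) (fun i j h1 h2 h3 => zlt n i j h1 h2 h3)
        (fun j h1 h2 => by rw [pe]; exact hzero l n j h1 h2) x hne
      rwa [pe] at this
    -- monotone counting function
    have hNsubset : ∀ n, 1 ≤ n →
        (Finset.Icc 1 n).filter (fun j => z l n j < x)
          ⊆ (Finset.Icc 1 (n+1)).filter (fun j => z l (n+1) j < x) := by
      intro n hn j hj
      rw [Finset.mem_filter, Finset.mem_Icc] at hj ⊢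
      exact ⟨⟨hj.1.1, by omega⟩, lt_trans (hsep1 l n j hj.1.1 hj.1.2) hj.2⟩
    have hNmono : ∀ m n, 1 ≤ m → m ≤ n →
        ((Finset.Icc 1 m).filter (fun j => z l m j < x)).card
          ≤ ((Finset.Icc 1 n).filter (fun j => z l n j < x)).card := by
      intro m n hm hmn
      induction n with
      | zero => omega
      | succ n ih =>
        rcases Nat.lt_or_ge m (n+1) with h' | h'
        · have hmn' : m ≤ n := by omega
          exact le_trans (ih hmn') (Finset.card_le_card (hNsubset n (by omega)))
        · have : m = n + 1 := by omega
          subst this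
          exact le_rfl
    -- the counting function strictly increases somewhere beyond any point
    have hstep : ∀ m, 1 ≤ m → ∃ n, m < n ∧
        ((Finset.Icc 1 m).filter (fun j => z l m j < x)).card
          < ((Finset.Icc 1 n).filter (fun j => z l n j < x)).card := by
      intro m hm
      by_cases hroot : ∃ n, m ≤ n ∧ ∃ j, 1 ≤ j ∧ j ≤ n ∧ z l n j = x
      · obtain ⟨n, hmn, j, hj1, hjn, hzx⟩ := hroot
        refine ⟨n+1, by omega, ?_⟩
        have h1 := hNmono m n hm hmn
        have h2 : ((Finset.Icc 1 n).filter (fun j => z l n j < x)).card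
            < ((Finset.Icc 1 (n+1)).filter (fun j => z l (n+1) j < x)).card := by
          refine Finset.card_lt_card ?_
          rw [Finset.ssubset_iff_of_subset (hNsubset n (by omega))]
          refine ⟨j, ?_, ?_⟩
          · rw [Finset.mem_filter, Finset.mem_Icc]
            refine ⟨⟨hj1, by omega⟩, ?_⟩
            rw [← hzx]
            exact hsep1 l n j hj1 hjn
          · rw [Finset.mem_filter]
            rw [Finset.mem_Icc]
            intro hcon
            rw [hzx] at hcon
            exact lt_irrefl x hcon.2
        omega
      · push_neg at hroot
        by_cases hpar : Even (((Finset.Icc 1 m).filter (fun j => z l m j < x)).card)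
        · obtain ⟨n, hn1, hn2⟩ := hosc_neg (m+1)
          refine ⟨n, by omega, ?_⟩
          have hs := hsign n (by omega) (hroot n (by omega))
          have hodd : ¬ Even (((Finset.Icc 1 n).filter (fun j => z l n j < x)).card) := by
            intro he
            rw [he.neg_one_pow, one_mul] at hs
            linarith
          have hle := hNmono m n hm (by omega)
          rcases eq_or_lt_of_le hle with h' | h'
          · exact absurd (h' ▸ hpar) hodd
          · exact h'
        · obtain ⟨n, hn1, hn2⟩ := hosc_pos (m+1)
          refine ⟨n, by omega, ?_⟩
          have hs := hsign n (by omega) (hroot n (by omega))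
          have heven : Even (((Finset.Icc 1 n).filter (fun j => z l n j < x)).card) := by
            by_contra hodd
            have hoddn : Odd (((Finset.Icc 1 n).filter (fun j => z l n j < x)).card) :=
              Nat.odd_iff.mpr (Nat.not_even_iff.mp hodd)
            rw [hoddn.neg_one_pow, neg_one_mul] at hs
            linarith
          have hle := hNmono m n hm (by omega)
          rcases eq_or_lt_of_le hle with h' | h'
          · exact absurd (h' ▸ heven) hpar
          · exact h'
    -- the counting function is unbounded
    have hunb : ∀ c, ∃ n, 1 ≤ n ∧ c ≤ ((Finset.Icc 1 n).filter (fun j => z l n j < x)).card := by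
      intro c
      induction c with
      | zero => exact ⟨1, le_rfl, Nat.zero_le _⟩
      | succ c ih =>
        obtain ⟨n, hn1, hnc⟩ := ih
        obtain ⟨n', hn'1, hn'2⟩ := hstep n hn1
        exact ⟨n', by omega, by omega⟩
    obtain ⟨n, hn1, hni⟩ := hunb i
    have hiN : i ∈ (Finset.Icc 1 n).filter (fun j => z l n j < x) := by
      by_contra hnotin
      have hsub : (Finset.Icc 1 n).filter (fun j => z l n j < x) ⊆ Finset.Ico 1 i := by
        intro j hj
        rw [Finset.mem_filter, Finset.mem_Icc] at hj
        rw [Finset.mem_Ico]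
        refine ⟨hj.1.1, ?_⟩
        by_contra hge
        push_neg at hge
        apply hnotin
        rw [Finset.mem_filter, Finset.mem_Icc]
        have hle2 : z l n i ≤ z l n j := zle n i j hi hge hj.1.2
        exact ⟨⟨hi, le_trans hge hj.1.2⟩, lt_of_le_of_lt hle2 hj.2⟩
      have := Finset.card_le_card hsub
      rw [Nat.card_Ico] at this
      omega
    rw [Finset.mem_filter, Finset.mem_Icc] at hiN
    exact ⟨n, hiN.1.2, hiN.2⟩
  -- conclude
  have hge0 : 0 ≤ xi l i := by
    refine ge_of_tendsto (hxi l i hi) ?_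
    filter_upwards [eventually_ge_atTop i] with n hn
    exact (hzpos l n i hi hn).le
  have hlt : ∀ x : ℝ, 0 < x → xi l i < x := by
    intro x hx
    obtain ⟨n, hni, hz⟩ := main x hx
    have hanti : ∀ n', n ≤ n' → z l n' i ≤ z l n i := by
      intro n' hn'
      induction n' with
      | zero =>
        have hn0 : n = 0 := Nat.le_zero.mp hn'
        rw [hn0]
      | succ n' ih =>
        rcases Nat.lt_or_ge n (n'+1) with h' | h'
        · have h2 : n ≤ n' := by omega
          exact le_trans (le_of_lt (hsep1 l n' i hi (le_trans hni h2))) (ih h2)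
        · have he : n = n'+1 := by omega
          rw [he]
    have hxle : xi l i ≤ z l n i := by
      refine le_of_tendsto (hxi l i hi) ?_
      filter_upwards [eventually_ge_atTop n] with n' hn'
      exact hanti n' hn'
    exact lt_of_le_of_lt hxle hz
  by_contra hne
  have hpos : 0 < xi l i := lt_of_le_of_ne hge0 (Ne.symm hne)
  exact lt_irrefl _ (hlt _ hpos)
end

section
/- (Proposition 2(i)) Suppose K_∞ = ∞ and L_∞ < ∞. Then D = ∞ and, for every l ≥ 0, lim_{n→∞} Q_n^{(l)}(0) = 1 + μ_l π_l (L_∞ − L_{l−1}) < ∞. -/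
open Filter Topology ENNReal MeasureTheory

theorem stmt6
    (lam mu : ℕ → ℝ) (pi : ℕ → ℝ)
    (hlam : ∀ n, 0 < lam n) (hmu0 : 0 ≤ mu 0) (hmu : ∀ n, 1 ≤ n → 0 < mu n)
    (hpi0 : pi 0 = 1) (hpi : ∀ n, pi (n + 1) = pi n * lam n / mu (n + 1))
    (K : ℕ → ℝ≥0∞) (hK : ∀ n, K n = ∑ i ∈ Finset.range (n + 1), ENNReal.ofReal (pi i))
    (Kinf Linf C D : ℝ≥0∞)
    (hKinf : Kinf = ∑' i, ENNReal.ofReal (pi i))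
    (hLinf : Linf = ∑' i, ENNReal.ofReal (1 / (lam i * pi i)))
    (hC : C = ∑' n, ENNReal.ofReal (1 / (lam n * pi n)) * K n)
    (hD : D = ∑' n, ENNReal.ofReal (1 / (lam n * pi n)) * (Kinf - K n))
    (Q : ℕ → ℕ → ℝ → ℝ)
    (hQ0 : ∀ l x, Q l 0 x = 1)
    (hQ1 : ∀ l x, lam l * Q l 1 x = lam l + mu l - x)
    (hQrec : ∀ l n x, lam (n + 1 + l) * Q l (n + 2) x
      = (lam (n + 1 + l) + mu (n + 1 + l) - x) * Q l (n + 1) x - mu (n + 1 + l) * Q l n x)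
    (Lp : ℕ → ℝ) (hLp : ∀ m, Lp m = ∑ i ∈ Finset.range m, (lam i * pi i)⁻¹)
    (hKtop : Kinf = ⊤) (hLfin : Linf ≠ ⊤) :
    D = ⊤ ∧
      ∀ l, Tendsto (fun n => Q l n 0) atTop
        (nhds (1 + mu l * pi l * ((∑' i, (lam i * pi i)⁻¹) - Lp l))) := by
  have hpipos : ∀ n, 0 < pi n := by
    intro n
    induction n with
    | zero => simp [hpi0]
    | succ n ih =>
      rw [hpi n]
      exact div_pos (mul_pos ih (hlam n)) (hmu (n + 1) (by omega))
  have hlp : ∀ n, 0 < lam n * pi n := fun n => mul_pos (hlam n) (hpipos n)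
  constructor
  · -- D = ⊤
    rw [hD]
    have h0 : ENNReal.ofReal (1 / (lam 0 * pi 0)) * (Kinf - K 0) = ⊤ := by
      have hK0 : K 0 ≠ ⊤ := by
        rw [hK 0]
        exact (ENNReal.sum_lt_top.2 fun i _ => ENNReal.ofReal_lt_top).ne
      rw [hKtop, ENNReal.top_sub hK0, ENNReal.mul_top]
      exact (ENNReal.ofReal_pos.2 (one_div_pos.2 (hlp 0))).ne'
    exact top_le_iff.1 (h0 ▸ ENNReal.le_tsum 0)
  · -- limit
    have hsum : Summable (fun i => (lam i * pi i)⁻¹) := by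
      have hfin : (∑' i, ENNReal.ofReal (1 / (lam i * pi i))) ≠ ⊤ := hLinf ▸ hLfin
      have := ENNReal.summable_toReal hfin
      refine this.congr fun i => ?_
      rw [ENNReal.toReal_ofReal (one_div_pos.2 (hlp i)).le, one_div]
    have hS : Tendsto (fun m => Lp m) atTop (𝓝 (∑' i, (lam i * pi i)⁻¹)) := by
      have := hsum.hasSum.tendsto_sum_nat
      simpa only [hLp] using this
    intro l
    -- difference formula
    have hd : ∀ n, Q l (n + 1) 0 - Q l n 0 = mu l * pi l * (lam (n + l) * pi (n + l))⁻¹ := by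
      intro n
      induction n with
      | zero =>
        have h1 := hQ1 l 0
        have hl := (hlam l).ne'
        have hp := (hpipos l).ne'
        rw [hQ0, Nat.zero_add, Nat.zero_add]
        field_simp
        linear_combination h1
      | succ n ih =>
        have hr := hQrec l n 0
        have hl := (hlam (n + 1 + l)).ne'
        have hpi' := hpi (n + l)
        have hmun : mu (n + l + 1) ≠ 0 := (hmu (n + l + 1) (by omega)).ne'
        have hln : lam (n + l) ≠ 0 := (hlam (n + l)).ne'
        have hpn : pi (n + l) ≠ 0 := (hpipos (n + l)).ne'
        have hstep : Q l (n + 2) 0 - Q l (n + 1) 0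
            = (mu (n + 1 + l) / lam (n + 1 + l)) * (Q l (n + 1) 0 - Q l n 0) := by
          field_simp
          linear_combination hr
        rw [hstep, ih]
        have hidx : n + 1 + l = n + l + 1 := by omega
        rw [hidx, hpi']
        have hl' : lam (n + l + 1) ≠ 0 := (hlam _).ne'
        field_simp
    have hQform : ∀ n, Q l n 0
        = 1 + mu l * pi l * ∑ k ∈ Finset.range n, (lam (k + l) * pi (k + l))⁻¹ := by
      intro n
      induction n with
      | zero => simp [hQ0]
      | succ n ih =>
        rw [Finset.sum_range_succ, mul_add]
        have : Q l (n + 1) 0 = Q l n 0 + mu l * pi l * (lam (n + l) * pi (n + l))⁻¹ := by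
          linarith [hd n]
        rw [this, ih]; ring
    have hsplit : ∀ n, ∑ k ∈ Finset.range n, (lam (k + l) * pi (k + l))⁻¹
        = Lp (l + n) - Lp l := by
      intro n
      rw [hLp, hLp, Finset.sum_range_add]
      simp [add_comm l]
    have hm : Tendsto (fun n : ℕ => l + n) atTop atTop :=
      tendsto_atTop_mono (fun n => Nat.le_add_left n l) tendsto_id
    have htend : Tendsto (fun n => Lp (l + n)) atTop (𝓝 (∑' i, (lam i * pi i)⁻¹)) :=
      hS.comp hm
    have : Tendsto (fun n => 1 + mu l * pi l * (Lp (l + n) - Lp l)) atTop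
        (𝓝 (1 + mu l * pi l * ((∑' i, (lam i * pi i)⁻¹) - Lp l))) :=
      (((htend.sub_const (Lp l)).const_mul (mu l * pi l)).const_add 1)
    refine this.congr fun n => ?_
    rw [hQform n, hsplit n]
end

section
/- (Proposition 2(ii)) Suppose K_∞ = ∞, L_∞ < ∞ and C = ∞. Then for every l ≥ 0: (a) for every real x < 0, Q_n^{(l)}(x) → ∞ as n → ∞; (b) for every real x such that 0 < x ≤ ξ_k^{(l)} for some k ≥ 1, Q_n^{(l)}(x) → 0 as n → ∞. -/
open Filter Topology ENNReal MeasureTheory Finset Polynomial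


-- bridge lemmas
lemma bd_tendsto_of_ofReal_tsum_top {f : ℕ → ℝ} (hf : ∀ n, 0 ≤ f n)
    (h : ∑' n, ENNReal.ofReal (f n) = ⊤) :
    Tendsto (fun n => ∑ i ∈ range n, f i) atTop atTop := by
  rw [← not_summable_iff_tendsto_nat_atTop_of_nonneg hf]
  intro hs
  rw [← ENNReal.ofReal_tsum_of_nonneg hf hs] at h
  exact ENNReal.ofReal_ne_top h

lemma bd_summable_of_ofReal_tsum_ne_top {f : ℕ → ℝ} (hf : ∀ n, 0 ≤ f n)
    (h : ∑' n, ENNReal.ofReal (f n) ≠ ⊤) : Summable f := by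
  have := ENNReal.summable_toReal h
  simpa [ENNReal.toReal_ofReal (hf _)] using this

-- the fundamental identity
lemma bd_identity (a b p : ℕ → ℝ) (hb : ∀ n, b (n+1) ≠ 0)
    (hp0 : p 0 = 1) (hp : ∀ n, p (n+1) = p n * a n / b (n+1))
    (q : ℕ → ℝ) (x : ℝ)
    (hq0 : q 0 = 1) (hq1 : a 0 * q 1 = a 0 + b 0 - x)
    (hrec : ∀ n, a (n+1) * q (n+2) = (a (n+1) + b (n+1) - x) * q (n+1) - b (n+1) * q n) :
    ∀ n, a n * p n * (q (n+1) - q n) = b 0 - x * ∑ j ∈ range (n+1), p j * q j := by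
  have hpb : ∀ n, p (n+1) * b (n+1) = p n * a n := by
    intro n; rw [hp n, div_mul_cancel₀ _ (hb n)]
  intro n
  induction n with
  | zero => simp [hp0, hq0]; linear_combination hq1
  | succ n ih =>
    have h1 : a (n+1) * p (n+1) * (q (n+2) - q (n+1))
        = p (n+1) * b (n+1) * (q (n+1) - q n) - x * (p (n+1) * q (n+1)) := by
      linear_combination p (n+1) * hrec n
    rw [h1, hpb n, Finset.sum_range_succ]
    linear_combination ih

lemma bd_partA (a b p : ℕ → ℝ) (ha : ∀ n, 0 < a n) (hb0 : 0 ≤ b 0) (hp : ∀ n, 0 < p n)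
    (q : ℕ → ℝ) (x : ℝ) (hx : x < 0) (hq0 : q 0 = 1)
    (hid : ∀ n, a n * p n * (q (n+1) - q n) = b 0 - x * ∑ j ∈ range (n+1), p j * q j)
    (hCtop : Tendsto (fun n => ∑ m ∈ range n,
      (∑ j ∈ range (m+1), p j) / (a m * p m)) atTop atTop) :
    Tendsto q atTop atTop := by
  have hap : ∀ n, 0 < a n * p n := fun n => mul_pos (ha n) (hp n)
  -- q n ≥ 1 for all n
  have hge : ∀ n, ∀ j ≤ n, 1 ≤ q j := by
    intro n
    induction n with
    | zero => intro j hj; interval_cases j; simp [hq0]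
    | succ n ih =>
      intro j hj
      rcases Nat.lt_or_ge j (n+1) with h | h
      · exact ih j (Nat.lt_succ_iff.mp h)
      · have hj' : j = n + 1 := le_antisymm hj h
        subst hj'
        have hS : (∑ j ∈ range (n+1), p j) ≤ ∑ j ∈ range (n+1), p j * q j := by
          apply Finset.sum_le_sum
          intro i hi
          have := ih i (Nat.lt_succ_iff.mp (Finset.mem_range.mp hi))
          nlinarith [hp i]
        have hSpos : 0 < ∑ j ∈ range (n+1), p j :=
          Finset.sum_pos (fun i _ => hp i) (by simp)
        have hnum : 0 ≤ b 0 - x * ∑ j ∈ range (n+1), p j * q j := by nlinarith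
        have := hid n
        have hdiff : 0 ≤ q (n+1) - q n := by
          nlinarith [hap n]
        have := ih n le_rfl
        linarith
  have hge1 : ∀ n, 1 ≤ q n := fun n => hge n n le_rfl
  -- lower bound
  have hlow : ∀ n, 1 + (-x) * (∑ m ∈ range n,
      (∑ j ∈ range (m+1), p j) / (a m * p m)) ≤ q n := by
    intro n
    induction n with
    | zero => simp [hq0]
    | succ n ih =>
      rw [Finset.sum_range_succ]
      have hS : (∑ j ∈ range (n+1), p j) ≤ ∑ j ∈ range (n+1), p j * q j := by
        apply Finset.sum_le_sum
        intro i hi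
        nlinarith [hp i, hge1 i]
      have hid' := hid n
      have hstep : (-x) * ((∑ j ∈ range (n+1), p j) / (a n * p n)) ≤ q (n+1) - q n := by
        have h2 : q (n+1) - q n = (b 0 - x * ∑ j ∈ range (n+1), p j * q j) / (a n * p n) := by
          rw [eq_div_iff (ne_of_gt (hap n))]
          linear_combination hid'
        rw [h2, mul_div_assoc']
        have := hap n
        gcongr
        nlinarith
      linarith
  apply tendsto_atTop_mono hlow
  apply tendsto_atTop_add_const_left
  exact Tendsto.const_mul_atTop (by linarith : (0:ℝ) < -x) hCtop

lemma bd_partB (a p : ℕ → ℝ) (ha : ∀ n, 0 < a n) (hp : ∀ n, 0 < p n)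
    (x : ℝ) (hx : 0 < x) (R : ℕ → ℝ) (β : ℝ) (N : ℕ)
    (hpos : ∀ n, N ≤ n → 0 < R n)
    (hid : ∀ n, a n * p n * (R (n+1) - R n) = β - x * ∑ j ∈ range (n+1), p j * R j)
    (hKtop : Tendsto (fun n => ∑ j ∈ range n, p j) atTop atTop)
    (hL : Summable (fun n => 1 / (a n * p n)))
    (hCtop : Tendsto (fun n => ∑ m ∈ range n,
      (∑ j ∈ range (m+1), p j) / (a m * p m)) atTop atTop) :
    Tendsto R atTop (nhds 0) := by
  have hap : ∀ n, 0 < a n * p n := fun n => mul_pos (ha n) (hp n)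
  set S : ℕ → ℝ := fun n => ∑ j ∈ range (n+1), p j * R j with hS
  set K : ℕ → ℝ := fun n => ∑ j ∈ range n, p j with hK
  have hdiff : ∀ n, R (n+1) - R n = (β - x * S n) / (a n * p n) := by
    intro n
    rw [eq_div_iff (ne_of_gt (hap n))]
    linear_combination hid n
  -- S is monotone from N on
  have hSmono : ∀ m n, N ≤ m → m ≤ n → S m ≤ S n := by
    intro m n hNm hmn
    have : S n = S m + ∑ j ∈ Ico (m+1) (n+1), p j * R j := by
      rw [hS]
      simp only
      rw [← Finset.sum_range_add_sum_Ico _ (by omega : m + 1 ≤ n + 1)]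
    rw [this]
    have : 0 ≤ ∑ j ∈ Ico (m+1) (n+1), p j * R j := by
      apply Finset.sum_nonneg
      intro i hi
      have := Finset.mem_Ico.mp hi
      exact le_of_lt (mul_pos (hp i) (hpos i (by omega)))
    linarith
  -- Step 1: ∃ M ≥ N with β < x * S M
  have step1 : ∃ M, N ≤ M ∧ β < x * S M := by
    by_contra hcon
    push_neg at hcon
    -- then R is nondecreasing from N, so R j ≥ R N for j ≥ N
    have hmono : ∀ j, N ≤ j → R N ≤ R j := by
      intro j hj
      induction j with
      | zero => have h0 : N = 0 := Nat.le_zero.mp hj; simp [h0]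
      | succ j ih =>
        rcases Nat.lt_or_ge N (j+1) with h | h
        · have hNj : N ≤ j := by omega
          have : R N ≤ R j := ih hNj
          have h2 := hdiff j
          have : 0 ≤ R (j+1) - R j := by
            rw [h2]
            apply div_nonneg _ (le_of_lt (hap j))
            have := hcon j hNj
            linarith
          linarith
        · have heq : N = j + 1 := by omega
          rw [heq]
    -- S n ≥ S N + R N * (K (n+1) - K (N+1)) → ∞
    have hSlow : ∀ n, N ≤ n → S N + R N * (K (n+1) - K (N+1)) ≤ S n := by
      intro n hn
      have hsplit : S n = S N + ∑ j ∈ Ico (N+1) (n+1), p j * R j := by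
        rw [hS]; simp only
        rw [← Finset.sum_range_add_sum_Ico _ (by omega : N + 1 ≤ n + 1)]
      have hKsplit : K (n+1) - K (N+1) = ∑ j ∈ Ico (N+1) (n+1), p j := by
        rw [hK]; simp only
        rw [← Finset.sum_range_add_sum_Ico _ (by omega : N + 1 ≤ n + 1)]
        ring
      rw [hsplit, hKsplit, Finset.mul_sum]
      have : ∀ j ∈ Ico (N+1) (n+1), R N * p j ≤ p j * R j := by
        intro j hj
        have := Finset.mem_Ico.mp hj
        have h1 := hmono j (by omega)
        nlinarith [hp j, hpos N le_rfl]
      linarith [Finset.sum_le_sum this]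
    -- K → ∞ gives contradiction
    have hRN : 0 < R N := hpos N le_rfl
    have htop : Tendsto (fun n => S N + R N * (K (n+1) - K (N+1))) atTop atTop := by
      apply tendsto_atTop_add_const_left
      apply Tendsto.const_mul_atTop hRN
      apply tendsto_atTop_add_const_right
      exact hKtop.comp (tendsto_add_atTop_nat 1)
    have : Tendsto S atTop atTop := by
      apply tendsto_atTop_mono' _ _ htop
      filter_upwards [eventually_ge_atTop N] with n hn
      exact hSlow n hn
    have : ∀ᶠ n in atTop, β < x * S n := by
      have := (this.const_mul_atTop hx).eventually_gt_atTop β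
      simpa [mul_comm] using this
    rcases (this.and (eventually_ge_atTop N)).exists with ⟨n, h1, h2⟩
    exact absurd (hcon n h2) (not_le.mpr h1)
  obtain ⟨M, hNM, hM⟩ := step1
  -- Step 2: R strictly decreasing from M
  have hdec : ∀ n, M ≤ n → R (n+1) ≤ R n := by
    intro n hn
    have h1 := hdiff n
    have h2 : S M ≤ S n := hSmono M n hNM hn
    have : R (n+1) - R n ≤ 0 := by
      rw [h1]
      apply div_nonpos_of_nonpos_of_nonneg _ (le_of_lt (hap n))
      nlinarith
    linarith
  -- R (· + M) is antitone
  have hanti : Antitone (fun m => R (m + M)) := by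
    apply antitone_nat_of_succ_le
    intro m
    simpa [show m + M + 1 = m + 1 + M from by omega] using hdec (m + M) (by omega)
  have hbdd : BddBelow (Set.range (fun m => R (m + M))) := by
    refine ⟨0, ?_⟩
    rintro y ⟨m, rfl⟩
    exact le_of_lt (hpos (m + M) (by omega))
  have hconv : Tendsto (fun m => R (m + M)) atTop (nhds (⨅ m, R (m + M))) :=
    tendsto_atTop_ciInf hanti hbdd
  set c : ℝ := ⨅ m, R (m + M) with hc
  have hc0 : 0 ≤ c := le_ciInf fun m => le_of_lt (hpos (m + M) (by omega))
  -- Step 3: c = 0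
  have hceq : c = 0 := by
    by_contra hne
    have hcpos : 0 < c := lt_of_le_of_ne hc0 (Ne.symm hne)
    have hcle : ∀ j, M ≤ j → c ≤ R j := by
      intro j hj
      have : R j = R ((j - M) + M) := by congr 1; omega
      rw [this]
      exact ciInf_le hbdd _
    -- S n ≥ S M + c * (K (n+1) - K (M+1)) for n ≥ M
    have hSlow : ∀ n, M ≤ n → S M + c * (K (n+1) - K (M+1)) ≤ S n := by
      intro n hn
      have hsplit : S n = S M + ∑ j ∈ Ico (M+1) (n+1), p j * R j := by
        rw [hS]; simp only
        rw [← Finset.sum_range_add_sum_Ico _ (by omega : M + 1 ≤ n + 1)]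
      have hKsplit : K (n+1) - K (M+1) = ∑ j ∈ Ico (M+1) (n+1), p j := by
        rw [hK]; simp only
        rw [← Finset.sum_range_add_sum_Ico _ (by omega : M + 1 ≤ n + 1)]
        ring
      rw [hsplit, hKsplit, Finset.mul_sum]
      have : ∀ j ∈ Ico (M+1) (n+1), c * p j ≤ p j * R j := by
        intro j hj
        have := Finset.mem_Ico.mp hj
        have h1 := hcle j (by omega)
        nlinarith [hp j]
      linarith [Finset.sum_le_sum this]
    set γ : ℝ := β - x * S M + x * c * K (M+1) with hγ
    set T : ℝ := ∑' n, 1 / (a n * p n) with hT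
    have hTnn : ∀ n, (0:ℝ) ≤ 1 / (a n * p n) := fun n => le_of_lt (div_pos one_pos (hap n))
    set CC : ℕ → ℝ := fun s => ∑ m ∈ range s, (∑ j ∈ range (m+1), p j) / (a m * p m) with hCC
    have hbound : ∀ t, R (M + t) ≤ R M + |γ| * T - x * c * (CC (M + t) - CC M) := by
      intro t
      have htel := Finset.sum_range_sub (fun i => R (M + i)) t
      simp only [← Nat.add_assoc] at htel
      have hterm : ∀ i ∈ range t, R (M + i + 1) - R (M + i)
          ≤ γ * (1 / (a (M+i) * p (M+i))) - x * c * (K (M+i+1) / (a (M+i) * p (M+i))) := by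
        intro i _
        have h1 : R (M + i + 1) - R (M + i) = (β - x * S (M+i)) / (a (M+i) * p (M+i)) :=
          hdiff (M+i)
        have h2 : γ * (1 / (a (M+i) * p (M+i))) - x * c * (K (M+i+1) / (a (M+i) * p (M+i)))
            = (γ - x * c * K (M+i+1)) / (a (M+i) * p (M+i)) := by
          rw [mul_one_div, ← mul_div_assoc, div_sub_div_same]
        rw [h1, h2]
        have hd := hap (M+i)
        apply div_le_div_of_nonneg_right _ hd.le
        have h3 := hSlow (M+i) (by omega)
        have h4 := mul_le_mul_of_nonneg_left h3 hx.le
        rw [hγ]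
        nlinarith
      have hsum := Finset.sum_le_sum hterm
      rw [htel] at hsum
      have hsplit : ∑ i ∈ range t, (γ * (1 / (a (M+i) * p (M+i)))
            - x * c * (K (M+i+1) / (a (M+i) * p (M+i))))
          = γ * (∑ i ∈ range t, 1 / (a (M+i) * p (M+i)))
            - x * c * (∑ i ∈ range t, K (M+i+1) / (a (M+i) * p (M+i))) := by
        rw [Finset.sum_sub_distrib, Finset.mul_sum, Finset.mul_sum]
      have hCCsplit : ∑ i ∈ range t, K (M+i+1) / (a (M+i) * p (M+i)) = CC (M + t) - CC M := by
        rw [hCC]; simp only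
        rw [Finset.sum_range_add]
        simp only [hK]
        ring
      have hTbd : ∑ i ∈ range t, 1 / (a (M+i) * p (M+i)) ≤ T := by
        have heq : ∑ i ∈ range t, 1 / (a (M+i) * p (M+i))
            = ∑ j ∈ Ico M (M + t), 1 / (a j * p j) := by
          rw [Finset.sum_Ico_eq_sum_range]
          simp
        rw [heq, hT]
        exact Summable.sum_le_tsum _ (fun i _ => hTnn i) hL
      have hγbd : γ * (∑ i ∈ range t, 1 / (a (M+i) * p (M+i))) ≤ |γ| * T := by
        calc γ * (∑ i ∈ range t, 1 / (a (M+i) * p (M+i)))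
            ≤ |γ| * (∑ i ∈ range t, 1 / (a (M+i) * p (M+i))) := by
              apply mul_le_mul_of_nonneg_right (le_abs_self γ)
              exact Finset.sum_nonneg fun i _ => hTnn (M+i)
          _ ≤ |γ| * T := by
              apply mul_le_mul_of_nonneg_left hTbd (abs_nonneg γ)
      rw [hsplit, hCCsplit] at hsum
      have : R (M + t) - R (M + 0) ≤ |γ| * T - x * c * (CC (M + t) - CC M) := by
        calc R (M + t) - R (M + 0)
            ≤ γ * (∑ i ∈ range t, 1 / (a (M+i) * p (M+i))) - x * c * (CC (M + t) - CC M) := hsum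
          _ ≤ |γ| * T - x * c * (CC (M + t) - CC M) := by linarith
      simp only [Nat.add_zero] at this
      linarith
    -- contradiction from CC → ∞
    have hCCtop : Tendsto (fun t => CC (M + t)) atTop atTop := by
      have := hCtop.comp (tendsto_add_atTop_nat M)
      simpa [Function.comp_def, Nat.add_comm] using this
    have hev := hCCtop.eventually_gt_atTop ((R M + |γ| * T) / (x * c) + CC M)
    rcases hev.exists with ⟨t, ht⟩
    have hxc : 0 < x * c := mul_pos hx hcpos
    have h0 : (R M + |γ| * T) / (x * c) < CC (M + t) - CC M := by linarith
    have h1 : R M + |γ| * T < (CC (M + t) - CC M) * (x * c) := (div_lt_iff₀ hxc).mp h0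
    have h2 := hbound t
    have h3 := hpos (M + t) (by omega)
    nlinarith
  rw [hceq] at hconv
  have := (tendsto_add_atTop_iff_nat M).mp hconv
  exact this

noncomputable def bdPol (a b : ℕ → ℝ) : ℕ → Polynomial ℝ
  | 0 => 1
  | 1 => Polynomial.C ((a 0 + b 0) / a 0) - Polynomial.C (1 / a 0) * Polynomial.X
  | (n+2) => (Polynomial.C ((a (n+1) + b (n+1)) / a (n+1))
        - Polynomial.C (1 / a (n+1)) * Polynomial.X) * bdPol a b (n+1)
      - Polynomial.C (b (n+1) / a (n+1)) * bdPol a b n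

lemma bdPol_eval (a b : ℕ → ℝ) (ha : ∀ n, 0 < a n) (q : ℕ → ℝ) (x : ℝ)
    (hq0 : q 0 = 1) (hq1 : a 0 * q 1 = a 0 + b 0 - x)
    (hrec : ∀ n, a (n+1) * q (n+2) = (a (n+1) + b (n+1) - x) * q (n+1) - b (n+1) * q n) :
    ∀ n, (bdPol a b n).eval x = q n := by
  have key : ∀ n, (bdPol a b n).eval x = q n ∧ (bdPol a b (n+1)).eval x = q (n+1) := by
    intro n
    induction n with
    | zero =>
      constructor
      · simp [bdPol, hq0]
      · simp [bdPol]
        have h0 := (ha 0).ne'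
        field_simp
        linear_combination -hq1
    | succ n ih =>
      refine ⟨ih.2, ?_⟩
      show ((Polynomial.C ((a (n+1) + b (n+1)) / a (n+1))
        - Polynomial.C (1 / a (n+1)) * Polynomial.X) * bdPol a b (n+1)
      - Polynomial.C (b (n+1) / a (n+1)) * bdPol a b n).eval x = q (n+2)
      simp [ih.1, ih.2]
      have h0 := (ha (n+1)).ne'
      field_simp
      linear_combination -hrec n
  exact fun n => (key n).1

lemma bdPol_deg (a b : ℕ → ℝ) (ha : ∀ n, 0 < a n) :
    ∀ n, (bdPol a b n).natDegree ≤ n ∧ 0 < (-1:ℝ)^n * (bdPol a b n).coeff n := by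
  have deg1 : ∀ m, (Polynomial.C ((a m + b m) / a m)
      - Polynomial.C (1 / a m) * Polynomial.X).natDegree ≤ 1 := by
    intro m
    apply le_trans (Polynomial.natDegree_sub_le _ _)
    simp [Polynomial.natDegree_C_mul_le]
    exact Polynomial.natDegree_C_mul_le _ _ |>.trans (by simp)
  have key : ∀ n, ((bdPol a b n).natDegree ≤ n ∧ 0 < (-1:ℝ)^n * (bdPol a b n).coeff n)
      ∧ ((bdPol a b (n+1)).natDegree ≤ n+1 ∧ 0 < (-1:ℝ)^(n+1) * (bdPol a b (n+1)).coeff (n+1)) := by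
    intro n
    induction n with
    | zero =>
      refine ⟨⟨by simp [bdPol], by simp [bdPol]⟩, ?_, ?_⟩
      · exact deg1 0
      · show (0:ℝ) < (-1)^1 * (Polynomial.C ((a 0 + b 0) / a 0)
          - Polynomial.C (1 / a 0) * Polynomial.X).coeff 1
        simp [Polynomial.coeff_C]
        have := ha 0
        positivity
    | succ n ih =>
      refine ⟨ih.2, ?_, ?_⟩
      · show ((Polynomial.C ((a (n+1) + b (n+1)) / a (n+1))
            - Polynomial.C (1 / a (n+1)) * Polynomial.X) * bdPol a b (n+1)
          - Polynomial.C (b (n+1) / a (n+1)) * bdPol a b n).natDegree ≤ n+2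
        apply le_trans (Polynomial.natDegree_sub_le _ _)
        apply max_le
        · apply le_trans (Polynomial.natDegree_mul_le)
          have := deg1 (n+1)
          have := ih.2.1
          omega
        · apply le_trans (Polynomial.natDegree_C_mul_le _ _)
          have := ih.1.1
          omega
      · show (0:ℝ) < (-1)^(n+2) * ((Polynomial.C ((a (n+1) + b (n+1)) / a (n+1))
            - Polynomial.C (1 / a (n+1)) * Polynomial.X) * bdPol a b (n+1)
          - Polynomial.C (b (n+1) / a (n+1)) * bdPol a b n).coeff (n+2)
        have hc1 : ((Polynomial.C ((a (n+1) + b (n+1)) / a (n+1))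
            - Polynomial.C (1 / a (n+1)) * Polynomial.X) * bdPol a b (n+1)).coeff (n+2)
            = (a (n+1) + b (n+1)) / a (n+1) * (bdPol a b (n+1)).coeff (n+2)
              - 1 / a (n+1) * (bdPol a b (n+1)).coeff (n+1) := by
          rw [sub_mul, Polynomial.coeff_sub, Polynomial.coeff_C_mul,
            mul_assoc, Polynomial.coeff_C_mul, Polynomial.coeff_X_mul]
        have hz1 : (bdPol a b (n+1)).coeff (n+2) = 0 :=
          Polynomial.coeff_eq_zero_of_natDegree_lt (by omega : (bdPol a b (n+1)).natDegree < n+2)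
        have hz2 : (bdPol a b n).coeff (n+2) = 0 :=
          Polynomial.coeff_eq_zero_of_natDegree_lt (lt_of_le_of_lt ih.1.1 (by omega))
        rw [Polynomial.coeff_sub, hc1, hz1, Polynomial.coeff_C_mul, hz2]
        have hpos := ih.2.2
        have h0 := ha (n+1)
        have : (-1:ℝ)^(n+2) = (-1)^(n+1) * (-1) := by ring
        rw [this]
        have hfa : 0 < 1 / a (n+1) := by positivity
        nlinarith [hpos, hfa]
  intro n; exact (key n).1

lemma bd_sign (P : Polynomial ℝ) (n : ℕ) (hdeg : P.natDegree ≤ n)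
    (hlc : 0 < (-1:ℝ)^n * P.coeff n)
    (w : ℕ → ℝ) (hroot : ∀ i, 1 ≤ i → i ≤ n → P.eval (w i) = 0)
    (hmono : ∀ i j, 1 ≤ i → i < j → j ≤ n → w i < w j)
    (x : ℝ) (hne : ∀ i, 1 ≤ i → i ≤ n → w i ≠ x) :
    0 < (-1:ℝ)^(((Finset.Icc 1 n).filter (fun i => w i < x)).card) * P.eval x := by
  classical
  have hcne : P.coeff n ≠ 0 := by
    intro h; rw [h] at hlc; simp at hlc
  have hdeg' : P.natDegree = n := Polynomial.natDegree_eq_of_le_of_coeff_ne_zero hdeg hcne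
  have hP0 : P ≠ 0 := by
    intro h; rw [h] at hcne; simp at hcne
  set m : Multiset ℝ := (Finset.Icc 1 n).val.map w with hm
  have hinj : ∀ i ∈ (Finset.Icc 1 n), ∀ j ∈ (Finset.Icc 1 n), w i = w j → i = j := by
    intro i hi j hj hw
    simp only [Finset.mem_Icc] at hi hj
    by_contra hij
    rcases Nat.lt_or_ge i j with h | h
    · exact absurd hw (ne_of_lt (hmono i j hi.1 h hj.2))
    · have : j < i := by omega
      exact absurd hw.symm (ne_of_lt (hmono j i hj.1 this hi.2))
  have hnodup : m.Nodup := Multiset.Nodup.map_on hinj (Finset.Icc 1 n).nodup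
  have hcard : Multiset.card m = n := by
    rw [hm, Multiset.card_map]
    simp [Nat.card_Icc]
  have hle : m ≤ P.roots := by
    rw [Multiset.le_iff_count]
    intro r
    by_cases hr : r ∈ m
    · have h1 : m.count r = 1 := by
        have := Multiset.nodup_iff_count_le_one.mp hnodup r
        have := Multiset.one_le_count_iff_mem.mpr hr
        omega
      rw [h1]
      apply Multiset.one_le_count_iff_mem.mpr
      rw [Polynomial.mem_roots hP0]
      obtain ⟨i, hi, rfl⟩ := Multiset.mem_map.mp hr
      simp only [Finset.mem_Icc] at *
      have hi' := Finset.mem_Icc.mp (Finset.mem_val.mp hi)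
      exact hroot i hi'.1 hi'.2
    · rw [Multiset.count_eq_zero_of_notMem hr]
      omega
  have hroots : P.roots = m := by
    symm
    apply Multiset.eq_of_le_of_card_le hle
    rw [hcard, ← hdeg']
    exact Polynomial.card_roots' P
  have hrc : Multiset.card P.roots = P.natDegree := by rw [hroots, hcard, hdeg']
  have hfac := Polynomial.C_leadingCoeff_mul_prod_multiset_X_sub_C hrc
  have heval : P.eval x = P.coeff n * ∏ i ∈ Finset.Icc 1 n, (x - w i) := by
    conv_lhs => rw [← hfac]
    rw [Polynomial.eval_mul, Polynomial.eval_C, Polynomial.eval_multiset_prod]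
    congr 1
    · rw [Polynomial.leadingCoeff, hdeg']
    · rw [hroots, hm, Multiset.map_map, Multiset.map_map, Finset.prod_eq_multiset_prod]
      congr 1
      ext i
      simp
  set s : Finset ℕ := (Finset.Icc 1 n).filter (fun i => w i < x) with hs
  set sc : Finset ℕ := (Finset.Icc 1 n).filter (fun i => ¬ (w i < x)) with hsc
  have hsplit : ∏ i ∈ Finset.Icc 1 n, (x - w i)
      = (∏ i ∈ s, (x - w i)) * ∏ i ∈ sc, (x - w i) :=
    (Finset.prod_filter_mul_prod_filter_not _ _ _).symm
  have hpos1 : 0 < ∏ i ∈ s, (x - w i) := by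
    apply Finset.prod_pos
    intro i hi
    have := (Finset.mem_filter.mp hi).2
    linarith
  have hneg : ∏ i ∈ sc, (x - w i) = (-1:ℝ)^(sc.card) * ∏ i ∈ sc, (w i - x) := by
    rw [← Finset.prod_const, ← Finset.prod_mul_distrib]
    congr 1; ext i; ring
  have hpos2 : 0 < ∏ i ∈ sc, (w i - x) := by
    apply Finset.prod_pos
    intro i hi
    have h1 := (Finset.mem_filter.mp hi).2
    have h2 := Finset.mem_Icc.mp (Finset.mem_filter.mp hi).1
    have := hne i h2.1 h2.2
    rcases lt_trichotomy (w i) x with h | h | h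
    · exact absurd h h1
    · exact absurd h this
    · linarith
  have hcards : s.card + sc.card = n := by
    rw [hs, hsc]
    rw [Finset.card_filter_add_card_filter_not]
    simp [Nat.card_Icc]
  have hfinal : (-1:ℝ)^(s.card) * P.eval x
      = ((-1:ℝ)^n * P.coeff n) * ((∏ i ∈ s, (x - w i)) * ∏ i ∈ sc, (w i - x)) := by
    rw [heval, hsplit, hneg]
    have h1 : (-1:ℝ)^(s.card) * (P.coeff n * ((∏ i ∈ s, (x - w i))
          * ((-1:ℝ)^(sc.card) * ∏ i ∈ sc, (w i - x))))
        = ((-1:ℝ)^(s.card) * (-1:ℝ)^(sc.card)) * P.coeff n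
          * ((∏ i ∈ s, (x - w i)) * ∏ i ∈ sc, (w i - x)) := by ring
    rw [h1, ← pow_add, hcards]
  rw [hfinal]
  exact mul_pos hlc (mul_pos hpos1 hpos2)


theorem stmt7
    (lam mu : ℕ → ℝ) (pi : ℕ → ℝ)
    (hlam : ∀ n, 0 < lam n) (hmu0 : 0 ≤ mu 0) (hmu : ∀ n, 1 ≤ n → 0 < mu n)
    (hpi0 : pi 0 = 1) (hpi : ∀ n, pi (n + 1) = pi n * lam n / mu (n + 1))
    (K : ℕ → ℝ≥0∞) (hK : ∀ n, K n = ∑ i ∈ Finset.range (n + 1), ENNReal.ofReal (pi i))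
    (Kinf Linf C D : ℝ≥0∞)
    (hKinf : Kinf = ∑' i, ENNReal.ofReal (pi i))
    (hLinf : Linf = ∑' i, ENNReal.ofReal (1 / (lam i * pi i)))
    (hC : C = ∑' n, ENNReal.ofReal (1 / (lam n * pi n)) * K n)
    (hD : D = ∑' n, ENNReal.ofReal (1 / (lam n * pi n)) * (Kinf - K n))
    (Q : ℕ → ℕ → ℝ → ℝ)
    (hQ0 : ∀ l x, Q l 0 x = 1)
    (hQ1 : ∀ l x, lam l * Q l 1 x = lam l + mu l - x)
    (hQrec : ∀ l n x, lam (n + 1 + l) * Q l (n + 2) x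
      = (lam (n + 1 + l) + mu (n + 1 + l) - x) * Q l (n + 1) x - mu (n + 1 + l) * Q l n x)
    (z : ℕ → ℕ → ℕ → ℝ) (xi : ℕ → ℕ → ℝ)
    (hzpos : ∀ l n i, 1 ≤ i → i ≤ n → 0 < z l n i)
    (hzlt : ∀ l n i, 1 ≤ i → i + 1 ≤ n → z l n i < z l n (i + 1))
    (hzero : ∀ l n i, 1 ≤ i → i ≤ n → Q l n (z l n i) = 0)
    (hzall : ∀ l n, 1 ≤ n → ∀ y, Q l n y = 0 → ∃ i, 1 ≤ i ∧ i ≤ n ∧ y = z l n i)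
    (hsep1 : ∀ l n i, 1 ≤ i → i ≤ n → z l (n + 1) i < z l n i)
    (hsep2 : ∀ l n i, 1 ≤ i → i ≤ n → z l n i < z l (n + 1) (i + 1))
    (hxi : ∀ l i, 1 ≤ i → Tendsto (fun n => z l n i) atTop (nhds (xi l i)))
    (hKtop : Kinf = ⊤) (hLfin : Linf ≠ ⊤) (hCtop : C = ⊤) :
    ∀ l, (∀ x : ℝ, x < 0 → Tendsto (fun n => Q l n x) atTop atTop) ∧
      (∀ x : ℝ, 0 < x → (∃ k, 1 ≤ k ∧ x ≤ xi l k) →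
        Tendsto (fun n => Q l n x) atTop (nhds 0)) := by
  classical
  intro l
  -- positivity of pi
  have hpipos : ∀ n, 0 < pi n := by
    intro n
    induction n with
    | zero => rw [hpi0]; norm_num
    | succ n ih =>
      rw [hpi n]
      have h1 := hlam n
      have h2 := hmu (n+1) (by omega)
      positivity
  -- real bridges
  have hKdiv : Tendsto (fun n => ∑ i ∈ range n, pi i) atTop atTop := by
    apply bd_tendsto_of_ofReal_tsum_top (fun n => (hpipos n).le)
    rw [← hKinf]; exact hKtop
  have hLsum : Summable (fun i => 1 / (lam i * pi i)) := by
    apply bd_summable_of_ofReal_tsum_ne_top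
      (fun n => le_of_lt (div_pos one_pos (mul_pos (hlam n) (hpipos n))))
    rw [← hLinf]; exact hLfin
  have hCreal : Tendsto (fun n => ∑ m ∈ range n,
      (∑ j ∈ range (m+1), pi j) / (lam m * pi m)) atTop atTop := by
    apply bd_tendsto_of_ofReal_tsum_top
    · intro m
      have h1 : (0:ℝ) < ∑ j ∈ range (m+1), pi j :=
        Finset.sum_pos (fun i _ => hpipos i) (by simp)
      have := mul_pos (hlam m) (hpipos m)
      positivity
    · have he : ∀ m, ENNReal.ofReal ((∑ j ∈ range (m+1), pi j) / (lam m * pi m))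
          = ENNReal.ofReal (1 / (lam m * pi m)) * K m := by
        intro m
        rw [hK m, ← ENNReal.ofReal_sum_of_nonneg (fun i _ => (hpipos i).le),
          ← ENNReal.ofReal_mul (le_of_lt (div_pos one_pos (mul_pos (hlam m) (hpipos m))))]
        congr 1
        rw [one_div, inv_mul_eq_div]
      rw [funext he, ← hC]
      exact hCtop
  -- shifted chain
  set A : ℕ → ℝ := fun n => lam (l + n) with hA
  set B : ℕ → ℝ := fun n => mu (l + n) with hB
  set p : ℕ → ℝ := fun n => pi (l + n) / pi l with hpdef
  have hApos : ∀ n, 0 < A n := fun n => hlam (l + n)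
  have hB0 : 0 ≤ B 0 := by
    show 0 ≤ mu (l + 0)
    rcases Nat.eq_zero_or_pos l with h | h
    · simp [h]; exact hmu0
    · exact (hmu (l+0) (by omega)).le
  have hBpos : ∀ n, 0 < B (n+1) := fun n => hmu (l + (n+1)) (by omega)
  have hplpos : 0 < pi l := hpipos l
  have hppos : ∀ n, 0 < p n := fun n => div_pos (hpipos (l + n)) hplpos
  have hp0 : p 0 = 1 := by
    show pi (l + 0) / pi l = 1
    rw [Nat.add_zero, div_self hplpos.ne']
  have hprec : ∀ n, p (n+1) = p n * A n / B (n+1) := by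
    intro n
    show pi (l + (n+1)) / pi l = (pi (l+n) / pi l) * lam (l+n) / mu (l + (n+1))
    have h1 : l + (n+1) = (l + n) + 1 := by omega
    rw [h1, hpi (l+n)]
    have h2 := (hmu ((l+n)+1) (by omega)).ne'
    rw [show l + (n+1) = (l+n)+1 from by omega] at *
    field_simp
  -- shifted K divergence
  have hKA : Tendsto (fun n => ∑ j ∈ range n, p j) atTop atTop := by
    have he : ∀ n, ∑ j ∈ range n, p j
        = ((∑ i ∈ range (l+n), pi i) - ∑ i ∈ range l, pi i) / pi l := by
      intro n
      rw [Finset.sum_range_add]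
      rw [hpdef, ← Finset.sum_div]
      congr 1
      ring
    rw [funext he]
    apply Tendsto.atTop_div_const hplpos
    apply tendsto_atTop_add_const_right
    have := hKdiv.comp (tendsto_add_atTop_nat l)
    simpa [Function.comp_def, Nat.add_comm] using this
  -- shifted L summability
  have hLA : Summable (fun n => 1 / (A n * p n)) := by
    have he : ∀ n, 1 / (A n * p n) = pi l * (1 / (lam (l+n) * pi (l+n))) := by
      intro n
      show 1 / (lam (l+n) * (pi (l+n) / pi l)) = pi l * (1 / (lam (l+n) * pi (l+n)))
      have h1 := (hlam (l+n)).ne'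
      have h2 := (hpipos (l+n)).ne'
      field_simp
    rw [funext he]
    apply Summable.mul_left
    have := (summable_nat_add_iff l).mpr hLsum
    simpa [Nat.add_comm] using this
  -- shifted C divergence
  have hCA : Tendsto (fun n => ∑ m ∈ range n,
      (∑ j ∈ range (m+1), p j) / (A m * p m)) atTop atTop := by
    set u : ℕ → ℝ := fun m => 1 / (lam m * pi m) with hu
    have hunn : ∀ m, 0 ≤ u m :=
      fun m => le_of_lt (div_pos one_pos (mul_pos (hlam m) (hpipos m)))
    have he : ∀ m, (∑ j ∈ range (m+1), p j) / (A m * p m)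
        = (∑ j ∈ range (l+(m+1)), pi j) / (lam (l+m) * pi (l+m))
          - (∑ j ∈ range l, pi j) * u (l+m) := by
      intro m
      have h0 : ∑ j ∈ range (m+1), p j
          = ((∑ i ∈ range (l+(m+1)), pi i) - ∑ i ∈ range l, pi i) / pi l := by
        conv_rhs => rw [Finset.sum_range_add]
        rw [hpdef, ← Finset.sum_div]
        congr 1; ring
      rw [h0]
      show ((∑ i ∈ range (l+(m+1)), pi i) - ∑ i ∈ range l, pi i) / pi l
          / (lam (l+m) * (pi (l+m) / pi l)) = _
      have h1 := (hlam (l+m)).ne'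
      have h2 := (hpipos (l+m)).ne'
      rw [hu]
      field_simp
    rw [funext he]
    have hsplit : ∀ n, ∑ m ∈ range n, ((∑ j ∈ range (l+(m+1)), pi j) / (lam (l+m) * pi (l+m))
        - (∑ j ∈ range l, pi j) * u (l+m))
        = (∑ m ∈ range n, (∑ j ∈ range (l+(m+1)), pi j) / (lam (l+m) * pi (l+m)))
          - ∑ m ∈ range n, (∑ j ∈ range l, pi j) * u (l+m) := by
      intro n; rw [Finset.sum_sub_distrib]
    rw [funext hsplit]
    -- first part tends to atTop, second is bounded
    have h1 : Tendsto (fun n => ∑ m ∈ range n,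
        (∑ j ∈ range (l+(m+1)), pi j) / (lam (l+m) * pi (l+m))) atTop atTop := by
      have hsr : ∀ n, ∑ m ∈ range n, (∑ j ∈ range (l+(m+1)), pi j) / (lam (l+m) * pi (l+m))
          = (∑ m ∈ range (l+n), (∑ j ∈ range (m+1), pi j) / (lam m * pi m))
            - ∑ m ∈ range l, (∑ j ∈ range (m+1), pi j) / (lam m * pi m) := by
        intro n
        have hg := Finset.sum_range_add
          (fun m => (∑ j ∈ range (m+1), pi j) / (lam m * pi m)) l n
        simp only [show ∀ m : ℕ, l + (m+1) = l + m + 1 from fun m => by omega]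
        linarith [hg]
      rw [funext hsr]
      apply tendsto_atTop_add_const_right
      have := hCreal.comp (tendsto_add_atTop_nat l)
      simpa [Function.comp_def, Nat.add_comm] using this
    have h2 : ∀ n, ∑ m ∈ range n, (∑ j ∈ range l, pi j) * u (l+m)
        ≤ (∑ j ∈ range l, pi j) * ∑' m, u (l+m) := by
      intro n
      rw [← Finset.mul_sum]
      apply mul_le_mul_of_nonneg_left _ (Finset.sum_nonneg fun i _ => (hpipos i).le)
      apply Summable.sum_le_tsum _ (fun i _ => hunn (l+i))
      have := (summable_nat_add_iff l).mpr hLsum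
      simpa [Nat.add_comm, hu] using this
    apply tendsto_atTop_mono' atTop _ (tendsto_atTop_add_const_right _
      (-((∑ j ∈ range l, pi j) * ∑' m, u (l+m))) h1)
    filter_upwards with n
    have := h2 n
    linarith
  -- general Q recurrences for shifted chain
  have hq1' : ∀ y : ℝ, A 0 * Q l 1 y = A 0 + B 0 - y := by
    intro y
    show lam (l+0) * Q l 1 y = lam (l+0) + mu (l+0) - y
    rw [Nat.add_zero]
    exact hQ1 l y
  have hqrec' : ∀ (y : ℝ) (n : ℕ), A (n+1) * Q l (n+2) y
      = (A (n+1) + B (n+1) - y) * Q l (n+1) y - B (n+1) * Q l n y := by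
    intro y n
    show lam (l+(n+1)) * Q l (n+2) y
      = (lam (l+(n+1)) + mu (l+(n+1)) - y) * Q l (n+1) y - mu (l+(n+1)) * Q l n y
    have := hQrec l n y
    rw [show n + 1 + l = l + (n+1) from by omega] at this
    exact this
  have hid' : ∀ (y : ℝ) (n : ℕ), A n * p n * (Q l (n+1) y - Q l n y)
      = B 0 - y * ∑ j ∈ range (n+1), p j * Q l j y := by
    intro y
    exact bd_identity A B p (fun n => (hBpos n).ne') hp0 hprec
      (fun n => Q l n y) y (hQ0 l y) (hq1' y) (fun n => hqrec' y n)
  have hevalQ : ∀ (y : ℝ) (m : ℕ), (bdPol A B m).eval y = Q l m y := by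
    intro y
    exact bdPol_eval A B hApos (fun n => Q l n y) y (hQ0 l y) (hq1' y) (fun n => hqrec' y n)
  constructor
  · -- part (a)
    intro x hx
    exact bd_partA A B p hApos hB0 hppos (fun n => Q l n x) x hx (hQ0 l x)
      (hid' x) hCA
  · -- part (b)
    intro x hx hex
    obtain ⟨k, hk1, hxk⟩ := hex
    -- strict monotonicity of zeros in the index i
    have zsmono : ∀ n i j, 1 ≤ i → i < j → j ≤ n → z l n i < z l n j := by
      intro n
      have key : ∀ d i, 1 ≤ i → i + (d+1) ≤ n → z l n i < z l n (i + (d+1)) := by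
        intro d
        induction d with
        | zero => intro i hi h; simpa using hzlt l n i hi (by omega)
        | succ d ih =>
          intro i hi h
          have h1 := ih i hi (by omega)
          have h2 := hzlt l n (i + (d+1)) (by omega) (by omega)
          exact lt_trans h1 h2
      intro i j hi hij hjn
      have hkey := key (j - i - 1) i hi (by omega)
      rwa [show i + (j - i - 1 + 1) = j from by omega] at hkey
    -- zeros decrease in n
    have zanti : ∀ i m n, 1 ≤ i → i ≤ m → m ≤ n → z l n i ≤ z l m i := by
      intro i m n hi him hmn
      have key : ∀ d, z l (m+d) i ≤ z l m i := by
        intro d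
        induction d with
        | zero => simp
        | succ d ih => exact le_trans (le_of_lt (hsep1 l (m+d) i hi (by omega))) ih
      have h := key (n - m)
      rwa [show m + (n-m) = n from by omega] at h
    have hxile : ∀ m, k ≤ m → xi l k ≤ z l m k := by
      intro m hm
      apply le_of_tendsto (hxi l k hk1)
      filter_upwards [eventually_ge_atTop m] with n hn
      exact zanti k m n hk1 hm hn
    have hxlt : ∀ n, k ≤ n → x < z l n k := by
      intro n hn
      calc x ≤ xi l k := hxk
        _ ≤ z l (n+1) k := hxile (n+1) (by omega)
        _ < z l n k := hsep1 l n k hk1 hn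
    -- the count of zeros below x stabilizes
    set jf : ℕ → ℕ := fun m => ((Finset.Icc 1 (k-1)).filter (fun i => z l (k+m) i < x)).card
      with hjf
    have hsub : ∀ m, ((Finset.Icc 1 (k-1)).filter (fun i => z l (k+m) i < x))
        ⊆ ((Finset.Icc 1 (k-1)).filter (fun i => z l (k+(m+1)) i < x)) := by
      intro m i hi
      rw [Finset.mem_filter] at hi ⊢
      obtain ⟨h1, h2⟩ := hi
      have hic := Finset.mem_Icc.mp h1
      refine ⟨h1, ?_⟩
      have hs := hsep1 l (k+m) i hic.1 (by omega)
      rw [show k + m + 1 = k + (m+1) from by omega] at hs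
      linarith
    have hjmono : Monotone jf := monotone_nat_of_le_succ (fun m => Finset.card_le_card (hsub m))
    have hjbdd : BddAbove (Set.range jf) := by
      refine ⟨k, ?_⟩
      rintro y ⟨m, rfl⟩
      have h1 := Finset.card_filter_le (Finset.Icc 1 (k-1)) (fun i => z l (k+m) i < x)
      have h2 : (Finset.Icc 1 (k-1)).card = k - 1 := by simp [Nat.card_Icc]
      show jf m ≤ k
      have h3 : jf m ≤ (Finset.Icc 1 (k-1)).card := h1
      omega
    obtain ⟨m0, hm0⟩ := Set.mem_range.mp (Nat.sSup_mem (Set.range_nonempty jf) hjbdd)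
    have hconst : ∀ m, m0 ≤ m → jf m = jf m0 := by
      intro m hm
      refine le_antisymm ?_ (hjmono hm)
      rw [hm0]
      exact le_csSup hjbdd (Set.mem_range_self m)
    set v : ℕ := jf m0 with hv
    set N : ℕ := k + m0 + 1 with hNdef
    have hNval : N = k + m0 + 1 := rfl
    -- no zero equals x beyond N
    have hnex : ∀ n, N ≤ n → ∀ i, 1 ≤ i → i ≤ n → z l n i ≠ x := by
      intro n hn i hi1 hin heq
      rcases Nat.lt_or_ge i k with hik | hik
      · have h1 : z l (n+1) i < x := by
          have hs := hsep1 l n i hi1 (by omega)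
          rw [heq] at hs; exact hs
        have h2 : ¬ (z l (n-1) i < x) := by
          have hs := hsep1 l (n-1) i hi1 (by omega)
          rw [show n - 1 + 1 = n from by omega, heq] at hs
          linarith
        have hc1 : jf (n+1-k) = v := hconst _ (by omega)
        have hc2 : jf (n-1-k) = v := hconst _ (by omega)
        have hss : (Finset.Icc 1 (k-1)).filter (fun i' => z l (k+(n-1-k)) i' < x)
            ⊆ (Finset.Icc 1 (k-1)).filter (fun i' => z l (k+(n+1-k)) i' < x) := by
          rw [show k+(n-1-k) = n-1 from by omega, show k+(n+1-k) = n+1 from by omega]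
          intro i' hi'
          rw [Finset.mem_filter] at hi' ⊢
          obtain ⟨ha', hb'⟩ := hi'
          have hic := Finset.mem_Icc.mp ha'
          refine ⟨ha', ?_⟩
          have s1 : z l n i' < z l (n-1) i' := by
            have hs := hsep1 l (n-1) i' hic.1 (by omega)
            rwa [show n - 1 + 1 = n from by omega] at hs
          have s2 : z l (n+1) i' < z l n i' := hsep1 l n i' hic.1 (by omega)
          linarith
        have hcardle : ((Finset.Icc 1 (k-1)).filter (fun i' => z l (k+(n+1-k)) i' < x)).card
            ≤ ((Finset.Icc 1 (k-1)).filter (fun i' => z l (k+(n-1-k)) i' < x)).card := by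
          have e1 : ((Finset.Icc 1 (k-1)).filter (fun i' => z l (k+(n+1-k)) i' < x)).card
              = jf (n+1-k) := rfl
          have e2 : ((Finset.Icc 1 (k-1)).filter (fun i' => z l (k+(n-1-k)) i' < x)).card
              = jf (n-1-k) := rfl
          rw [e1, e2, hc1, hc2]
        have hseteq := Finset.eq_of_subset_of_card_le hss hcardle
        have hi_in : i ∈ (Finset.Icc 1 (k-1)).filter (fun i' => z l (k+(n+1-k)) i' < x) := by
          rw [show k+(n+1-k) = n+1 from by omega, Finset.mem_filter, Finset.mem_Icc]
          exact ⟨⟨hi1, by omega⟩, h1⟩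
        rw [← hseteq, show k+(n-1-k) = n-1 from by omega, Finset.mem_filter] at hi_in
        exact h2 hi_in.2
      · have hge : z l n k ≤ z l n i := by
          rcases Nat.eq_or_lt_of_le hik with h | h
          · rw [← h]
          · exact le_of_lt (zsmono n k i hk1 h hin)
        have hlt := hxlt n (by omega)
        rw [heq] at hge
        linarith
    -- count over all zeros for n ≥ N equals v
    have hcount : ∀ n, N ≤ n → ((Finset.Icc 1 n).filter (fun i => z l n i < x)).card = v := by
      intro n hn
      have hfeq : (Finset.Icc 1 n).filter (fun i => z l n i < x)
          = (Finset.Icc 1 (k-1)).filter (fun i => z l (k+(n-k)) i < x) := by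
        rw [show k+(n-k) = n from by omega]
        ext i
        simp only [Finset.mem_filter, Finset.mem_Icc]
        constructor
        · rintro ⟨⟨h1, h2⟩, h3⟩
          refine ⟨⟨h1, ?_⟩, h3⟩
          by_contra hcon
          have hik : k ≤ i := by omega
          have hge : z l n k ≤ z l n i := by
            rcases Nat.eq_or_lt_of_le hik with h | h
            · rw [← h]
            · exact le_of_lt (zsmono n k i hk1 h h2)
          have hlt := hxlt n (by omega)
          linarith
        · rintro ⟨⟨h1, h2⟩, h3⟩
          exact ⟨⟨h1, by omega⟩, h3⟩
      rw [hfeq]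
      exact hconst (n-k) (by omega)
    -- eventual constant sign
    have hsign : ∀ n, N ≤ n → 0 < (-1:ℝ)^v * Q l n x := by
      intro n hn
      have hd := bdPol_deg A B hApos n
      have hs := bd_sign (bdPol A B n) n hd.1 hd.2 (z l n)
        (fun i h1 h2 => by rw [hevalQ]; exact hzero l n i h1 h2)
        (fun i j h1 h2 h3 => zsmono n i j h1 h2 h3)
        x (fun i h1 h2 => hnex n hn i h1 h2)
      rw [hevalQ, hcount n hn] at hs
      exact hs
    -- conclude via the abstract lemma
    set ε : ℝ := (-1:ℝ)^v with hε
    have hεsq : ε * ε = 1 := by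
      rw [hε, ← pow_add, ← two_mul, pow_mul]
      norm_num
    have hidR : ∀ n, A n * p n * ((ε * Q l (n+1) x) - (ε * Q l n x))
        = ε * B 0 - x * ∑ j ∈ range (n+1), p j * (ε * Q l j x) := by
      intro n
      have h0 := hid' x n
      have hsum : ∑ j ∈ range (n+1), p j * (ε * Q l j x)
          = ε * ∑ j ∈ range (n+1), p j * Q l j x := by
        rw [Finset.mul_sum]
        apply Finset.sum_congr rfl
        intro j _
        ring
      rw [hsum]
      linear_combination ε * h0
    have hR0 := bd_partB A p hApos hppos x hx (fun n => ε * Q l n x) (ε * B 0) N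
      (fun n hn => hsign n hn) hidR hKA hLA hCA
    have hfin := hR0.const_mul ε
    simp only [mul_zero] at hfin
    apply hfin.congr
    intro n
    show ε * (ε * Q l n x) = Q l n x
    rw [← mul_assoc, hεsq, one_mul]
end

section
/- (Proposition 3(i)) Suppose K_∞ < ∞ and L_∞ = ∞. Then C = ∞ and, for every l ≥ 1, and also for l = 0 provided μ_0 > 0, lim_{n→∞} Q_n^{(l)}(0) = ∞. -/
open Filter Topology ENNReal MeasureTheory

theorem stmt9
    (lam mu : ℕ → ℝ) (pi : ℕ → ℝ)
    (hlam : ∀ n, 0 < lam n) (hmu0 : 0 ≤ mu 0) (hmu : ∀ n, 1 ≤ n → 0 < mu n)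
    (hpi0 : pi 0 = 1) (hpi : ∀ n, pi (n + 1) = pi n * lam n / mu (n + 1))
    (K : ℕ → ℝ≥0∞) (hK : ∀ n, K n = ∑ i ∈ Finset.range (n + 1), ENNReal.ofReal (pi i))
    (Kinf Linf C D : ℝ≥0∞)
    (hKinf : Kinf = ∑' i, ENNReal.ofReal (pi i))
    (hLinf : Linf = ∑' i, ENNReal.ofReal (1 / (lam i * pi i)))
    (hC : C = ∑' n, ENNReal.ofReal (1 / (lam n * pi n)) * K n)
    (hD : D = ∑' n, ENNReal.ofReal (1 / (lam n * pi n)) * (Kinf - K n))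
    (Q : ℕ → ℕ → ℝ → ℝ)
    (hQ0 : ∀ l x, Q l 0 x = 1)
    (hQ1 : ∀ l x, lam l * Q l 1 x = lam l + mu l - x)
    (hQrec : ∀ l n x, lam (n + 1 + l) * Q l (n + 2) x
      = (lam (n + 1 + l) + mu (n + 1 + l) - x) * Q l (n + 1) x - mu (n + 1 + l) * Q l n x)
    (hKfin : Kinf ≠ ⊤) (hLtop : Linf = ⊤) :
    C = ⊤ ∧ (∀ l, 1 ≤ l → Tendsto (fun n => Q l n 0) atTop atTop) ∧
      (0 < mu 0 → Tendsto (fun n => Q 0 n 0) atTop atTop) := by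
  have hpipos : ∀ n, 0 < pi n := by
    intro n
    induction n with
    | zero => rw [hpi0]; norm_num
    | succ n ih =>
      rw [hpi n]
      exact div_pos (mul_pos ih (hlam n)) (hmu (n + 1) (by omega))
  have hCtop : C = ⊤ := by
    rw [hC, eq_top_iff, ← hLtop, hLinf]
    apply ENNReal.tsum_le_tsum
    intro n
    have h1 : (1 : ℝ≥0∞) ≤ K n := by
      rw [hK]
      calc (1 : ℝ≥0∞) = ENNReal.ofReal (pi 0) := by rw [hpi0]; simp
        _ ≤ _ := Finset.single_le_sum (f := fun i => ENNReal.ofReal (pi i))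
            (fun i _ => zero_le) (Finset.mem_range.mpr (Nat.succ_pos n))
    calc ENNReal.ofReal (1 / (lam n * pi n))
        = ENNReal.ofReal (1 / (lam n * pi n)) * 1 := (mul_one _).symm
      _ ≤ _ := mul_le_mul_right h1 _
  have main : ∀ l, 0 < mu l → Tendsto (fun n => Q l n 0) atTop atTop := by
    intro l hl
    set c := mu l * pi l with hc
    have hcpos : 0 < c := mul_pos hl (hpipos l)
    have hdiff : ∀ n, Q l (n + 1) 0 - Q l n 0 = c / (lam (n + l) * pi (n + l)) := by
      intro n
      induction n with
      | zero =>
        have h1 := hQ1 l 0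
        have hll := hlam l
        have hpl := hpipos l
        rw [hQ0]
        simp only [zero_add, hc]
        rw [_root_.eq_div_iff (by positivity)]
        nlinarith [h1]
      | succ n ih =>
        have hr := hQrec l n 0
        have hln := hlam (n + 1 + l)
        have hl2 := hlam (n + l)
        have hm := hmu (n + 1 + l) (by omega)
        have hp1 : pi (n + l + 1) = pi (n + l) * lam (n + l) / mu (n + l + 1) := hpi (n + l)
        have hpn : 0 < pi (n + l) := hpipos _
        have key : lam (n + 1 + l) * (Q l (n + 2) 0 - Q l (n + 1) 0)
            = mu (n + 1 + l) * (Q l (n + 1) 0 - Q l n 0) := by linarith [hr]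
        rw [ih] at key
        have he : n + 1 + l = n + l + 1 := by ring
        rw [he] at key hln hm ⊢
        rw [hp1]
        have goalr : c / (lam (n + l + 1) * (pi (n + l) * lam (n + l) / mu (n + l + 1)))
            = mu (n + l + 1) * (c / (lam (n + l) * pi (n + l))) / lam (n + l + 1) := by
          field_simp
        rw [goalr, ← key, mul_comm, mul_div_assoc, div_self hln.ne', mul_one]
    have hsum : ∀ n, Q l n 0 = 1 + c * ∑ k ∈ Finset.range n, 1 / (lam (k + l) * pi (k + l)) := by
      intro n
      induction n with
      | zero => simp [hQ0]
      | succ n ih =>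
        rw [Finset.sum_range_succ, mul_add, ← add_assoc, ← ih, mul_one_div]
        linarith [hdiff n]
    have hnonneg : ∀ k, 0 ≤ 1 / (lam (k + l) * pi (k + l)) := by
      intro k
      have := hlam (k + l); have := hpipos (k + l); positivity
    have hns : ¬ Summable (fun k => 1 / (lam (k + l) * pi (k + l))) := by
      intro hs
      have h2 := ENNReal.ofReal_tsum_of_nonneg hnonneg hs
      have h3 : ∑' k, ENNReal.ofReal (1 / (lam (k + l) * pi (k + l))) ≠ ⊤ := by
        rw [← h2]; exact ENNReal.ofReal_ne_top
      have h4 := Summable.sum_add_tsum_nat_add' (f := fun i => ENNReal.ofReal (1 / (lam i * pi i)))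
        (k := l) ENNReal.summable
      rw [← hLinf, hLtop] at h4
      have h5 : (∑ i ∈ Finset.range l, ENNReal.ofReal (1 / (lam i * pi i))) ≠ ⊤ := by
        exact (ENNReal.sum_lt_top.mpr fun i _ => ENNReal.ofReal_lt_top).ne
      have h6 : ∑' k, ENNReal.ofReal (1 / (lam (k + l) * pi (k + l))) = ⊤ := by
        by_contra h7
        exact absurd h4 (by
          simp only [ENNReal.add_eq_top]
          push_neg
          exact ⟨h5, h7⟩)
      exact h3 h6
    have htend : Tendsto (fun n => ∑ k ∈ Finset.range n, 1 / (lam (k + l) * pi (k + l)))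
        atTop atTop := (not_summable_iff_tendsto_nat_atTop_of_nonneg hnonneg).mp hns
    have htend2 : Tendsto (fun n => 1 + c * ∑ k ∈ Finset.range n, 1 / (lam (k + l) * pi (k + l)))
        atTop atTop := tendsto_atTop_add_const_left _ 1 (htend.const_mul_atTop hcpos)
    exact htend2.congr fun n => (hsum n).symm
  exact ⟨hCtop, fun l hl => main l (hmu l hl), fun h0 => main 0 h0⟩
end
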